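/- arXiv:1802.09674 — 6 statements merged into one kernel-verified Lean document; each statement's English description precedes it below -/
import Mathlib

section
/- The mean ρ(λ) of the measure Θ_λ is strictly increasing on [0, λ_c): for all λ_1, λ_2 with 0 ≤ λ_1 < λ_2 < λ_c, one has ρ(λ_1) < ρ(λ_2). -/
open scoped BigOperators

/-- The coefficients `a_k = (∏_{j=0}^{k-1} h(j)) / (∏_{j=1}^{k} g(j))`, with `a_0 = 1`. -/
noncomputable def coefA (g h : ℕ → ℝ) (k : ℕ) : ℝ :=
  (∏ j ∈ Finset.range k, h j) / ∏ j ∈ Finset.range k, g (j + 1)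

/-- The partition function `Z(λ) = Σ_{k ≥ 0} a_k λ^k`. -/
noncomputable def partZ (g h : ℕ → ℝ) (lam : ℝ) : ℝ :=
  ∑' k : ℕ, coefA g h k * lam ^ k

/-- The critical value `λ_c = liminf_{k → ∞} g(k+1)/h(k)` (as an extended real). -/
noncomputable def lamCrit (g h : ℕ → ℝ) : EReal :=
  Filter.liminf (fun k : ℕ => ((g (k + 1) / h k : ℝ) : EReal)) Filter.atTop

/-- The probability mass function `Θ_λ({k}) = a_k λ^k / Z(λ)`. -/
noncomputable def thetaPMF (g h : ℕ → ℝ) (lam : ℝ) (k : ℕ) : ℝ :=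
  coefA g h k * lam ^ k / partZ g h lam


open Filter

lemma coefA_pos (g h : ℕ → ℝ) (hg : ∀ k : ℕ, 1 ≤ k → 0 < g k) (hh : ∀ k : ℕ, 0 < h k)
    (k : ℕ) : 0 < coefA g h k := by
  apply div_pos
  · exact Finset.prod_pos fun j _ => hh j
  · exact Finset.prod_pos fun j _ => hg (j+1) (Nat.le_add_left 1 j)

lemma coefA_succ (g h : ℕ → ℝ) (k : ℕ) :
    coefA g h (k+1) = coefA g h k * (h k / g (k+1)) := by
  rw [coefA, coefA, Finset.prod_range_succ, Finset.prod_range_succ, div_mul_div_comm]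

lemma coefA_zero (g h : ℕ → ℝ) : coefA g h 0 = 1 := by simp [coefA]

lemma summable_main (g h : ℕ → ℝ) (hg : ∀ k : ℕ, 1 ≤ k → 0 < g k) (hh : ∀ k : ℕ, 0 < h k)
    (lam c : ℝ) (h0 : 0 ≤ lam) (hlc : lam < c)
    (hev : ∀ᶠ k in atTop, c < g (k+1) / h k) :
    Summable (fun k : ℕ => ((k:ℝ)+1) * (coefA g h k * lam ^ k)) := by
  have hc0 : 0 < c := lt_of_le_of_lt h0 hlc
  have hlc1 : lam / c < 1 := (div_lt_one hc0).mpr hlc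
  set r : ℝ := (lam / c + 1) / 2 with hr
  have hr1 : r < 1 := by rw [hr]; linarith
  have hrlc : lam / c < r := by rw [hr]; linarith
  have hT : Tendsto (fun k : ℕ => (1 + 1/((k:ℝ)+1)) * (lam/c)) atTop (nhds (1 * (lam/c))) := by
    have : (1 * (lam/c) : ℝ) = (1 + 0) * (lam/c) := by ring
    rw [this]
    exact ((tendsto_const_nhds.add tendsto_one_div_add_atTop_nhds_zero_nat).mul tendsto_const_nhds)
  have hev2 : ∀ᶠ k : ℕ in atTop, (1 + 1/((k:ℝ)+1)) * (lam/c) < r :=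
    hT.eventually_lt_const (by rwa [one_mul])
  apply summable_of_ratio_norm_eventually_le hr1
  filter_upwards [hev, hev2] with k hk1 hk2
  have hAk : 0 < coefA g h k := coefA_pos g h hg hh k
  have hgk : 0 < g (k+1) := hg (k+1) (Nat.le_add_left 1 k)
  have hfk : (0:ℝ) ≤ ((k:ℝ)+1) * (coefA g h k * lam ^ k) := by positivity
  have hfk1 : (0:ℝ) ≤ ((k:ℝ)+1+1) * (coefA g h (k+1) * lam ^ (k+1)) := by
    have := coefA_pos g h hg hh (k+1); positivity
  rw [Real.norm_of_nonneg hfk]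
  have : (((k:ℝ)+1)+1) * (coefA g h (k+1) * lam ^ (k+1)) ≤
      r * (((k:ℝ)+1) * (coefA g h k * lam ^ k)) := by
    have hhk : 0 < h k := hh k
    have hdiv : h k / g (k+1) ≤ 1 / c := by
      rw [div_le_div_iff₀ hgk hc0]
      have := (lt_div_iff₀ hhk).mp hk1
      linarith
    have hb : ((k:ℝ)+2) * (lam/c) ≤ r * ((k:ℝ)+1) := by
      have hk1' : (0:ℝ) < (k:ℝ)+1 := by positivity
      have hmul : ((k:ℝ)+1) * (1/((k:ℝ)+1)) = 1 := by field_simp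
      nlinarith [hk2, div_nonneg h0 hc0.le, hk1']
    calc (((k:ℝ)+1)+1) * (coefA g h (k+1) * lam ^ (k+1))
        = (((k:ℝ)+2) * (h k / g (k+1))) * (lam * (coefA g h k * lam ^ k)) := by
          rw [coefA_succ, pow_succ]; ring
      _ ≤ (((k:ℝ)+2) * (1/c)) * (lam * (coefA g h k * lam ^ k)) := by
          apply mul_le_mul_of_nonneg_right _ (by positivity)
          apply mul_le_mul_of_nonneg_left hdiv (by positivity)
      _ = (((k:ℝ)+2) * (lam/c)) * (coefA g h k * lam ^ k) := by ring
      _ ≤ (r * ((k:ℝ)+1)) * (coefA g h k * lam ^ k) :=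
          mul_le_mul_of_nonneg_right hb (by positivity)
      _ = r * (((k:ℝ)+1) * (coefA g h k * lam ^ k)) := by ring
  calc ‖((↑(k+1):ℝ)+1) * (coefA g h (k+1) * lam ^ (k+1))‖
      = (((k:ℝ)+1)+1) * (coefA g h (k+1) * lam ^ (k+1)) := by
        rw [Real.norm_of_nonneg]; · push_cast; ring
        · push_cast at hfk1 ⊢; linarith [hfk1]
    _ ≤ r * (((k:ℝ)+1) * (coefA g h k * lam ^ k)) := this

lemma key_nonneg (lam₁ lam₂ : ℝ) (h₁ : 0 ≤ lam₁) (h₁₂ : lam₁ ≤ lam₂) (k j : ℕ) :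
    0 ≤ ((k:ℝ) - (j:ℝ)) * (lam₂^k * lam₁^j - lam₁^k * lam₂^j) := by
  have h2 : 0 ≤ lam₂ := h₁.trans h₁₂
  rcases le_total j k with hjk | hkj
  · obtain ⟨m, rfl⟩ := Nat.exists_eq_add_of_le hjk
    have e : lam₂^(j+m) * lam₁^j - lam₁^(j+m) * lam₂^j = (lam₁*lam₂)^j * (lam₂^m - lam₁^m) := by
      rw [pow_add, pow_add, mul_pow]; ring
    apply mul_nonneg
    · push_cast; linarith [Nat.cast_nonneg (α := ℝ) m]
    · rw [e]
      exact mul_nonneg (pow_nonneg (mul_nonneg h₁ h2) j)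
        (sub_nonneg.mpr (pow_le_pow_left₀ h₁ h₁₂ m))
  · obtain ⟨m, rfl⟩ := Nat.exists_eq_add_of_le hkj
    have e : lam₂^k * lam₁^(k+m) - lam₁^k * lam₂^(k+m) = (lam₁*lam₂)^k * (lam₁^m - lam₂^m) := by
      rw [pow_add, pow_add, mul_pow]; ring
    have hA : ((k:ℝ) - (↑(k+m):ℝ)) ≤ 0 := by push_cast; linarith [Nat.cast_nonneg (α := ℝ) m]
    have hB : lam₂^k * lam₁^(k+m) - lam₁^k * lam₂^(k+m) ≤ 0 := by
      rw [e]
      exact mul_nonpos_of_nonneg_of_nonpos (pow_nonneg (mul_nonneg h₁ h2) k)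
        (sub_nonpos.mpr (pow_le_pow_left₀ h₁ h₁₂ m))
    nlinarith [mul_nonneg (neg_nonneg.mpr hA) (neg_nonneg.mpr hB)]

/-- Auxiliary double-sum integrand. -/
noncomputable def crossF (g h : ℕ → ℝ) (x y : ℝ) (p : ℕ × ℕ) : ℝ :=
  ((p.1:ℝ) * (coefA g h p.1 * x ^ p.1)) * (coefA g h p.2 * y ^ p.2)

set_option maxHeartbeats 1000000 in
lemma cross_lt (g h : ℕ → ℝ) (hg : ∀ k : ℕ, 1 ≤ k → 0 < g k) (hh : ∀ k : ℕ, 0 < h k)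
    (lam₁ lam₂ : ℝ) (h₁ : 0 ≤ lam₁) (h₁₂ : lam₁ < lam₂)
    (SN1 : Summable (fun k : ℕ => (k:ℝ) * (coefA g h k * lam₁ ^ k)))
    (SN2 : Summable (fun k : ℕ => (k:ℝ) * (coefA g h k * lam₂ ^ k)))
    (SZ1 : Summable (fun k : ℕ => coefA g h k * lam₁ ^ k))
    (SZ2 : Summable (fun k : ℕ => coefA g h k * lam₂ ^ k)) :
    (∑' k : ℕ, (k:ℝ) * (coefA g h k * lam₁ ^ k)) * (∑' k : ℕ, coefA g h k * lam₂ ^ k)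
      < (∑' k : ℕ, (k:ℝ) * (coefA g h k * lam₂ ^ k)) * (∑' k : ℕ, coefA g h k * lam₁ ^ k) := by
  have h2 : 0 ≤ lam₂ := h₁.trans h₁₂.le
  have apos : ∀ k, 0 < coefA g h k := coefA_pos g h hg hh
  have eF : (∑' k : ℕ, (k:ℝ) * (coefA g h k * lam₁ ^ k)) * (∑' k : ℕ, coefA g h k * lam₂ ^ k)
      = ∑' p : ℕ×ℕ, crossF g h lam₁ lam₂ p :=
    tsum_mul_tsum_of_summable_norm (summable_norm_iff.mpr SN1) (summable_norm_iff.mpr SZ2)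
  have eF' : (∑' k : ℕ, (k:ℝ) * (coefA g h k * lam₂ ^ k)) * (∑' k : ℕ, coefA g h k * lam₁ ^ k)
      = ∑' p : ℕ×ℕ, crossF g h lam₂ lam₁ p :=
    tsum_mul_tsum_of_summable_norm (summable_norm_iff.mpr SN2) (summable_norm_iff.mpr SZ1)
  have nn1 : 0 ≤ fun k : ℕ => (k:ℝ) * (coefA g h k * lam₁ ^ k) := by
    intro k; have := apos k; positivity
  have nn2 : 0 ≤ fun k : ℕ => (k:ℝ) * (coefA g h k * lam₂ ^ k) := by
    intro k; have := apos k; positivity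
  have nz1 : 0 ≤ fun k : ℕ => coefA g h k * lam₁ ^ k := by
    intro k; have := apos k; positivity
  have nz2 : 0 ≤ fun k : ℕ => coefA g h k * lam₂ ^ k := by
    intro k; have := apos k; positivity
  have SF : Summable (crossF g h lam₁ lam₂) := SN1.mul_of_nonneg SZ2 nn1 nz2
  have SF' : Summable (crossF g h lam₂ lam₁) := SN2.mul_of_nonneg SZ1 nn2 nz1
  set F := crossF g h lam₁ lam₂
  set F' := crossF g h lam₂ lam₁
  have SG : Summable (fun p : ℕ×ℕ => F' p - F p) := SF'.sub SF
  have SGswap : Summable (fun p : ℕ×ℕ => F' p.swap - F p.swap) :=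
    (Equiv.prodComm ℕ ℕ).summable_iff.mpr SG
  have hswap : ∑' p : ℕ×ℕ, (F' p.swap - F p.swap) = ∑' p : ℕ×ℕ, (F' p - F p) :=
    (Equiv.prodComm ℕ ℕ).tsum_eq (fun p : ℕ×ℕ => F' p - F p)
  have hident : ∀ k j : ℕ, (F' (k,j) - F (k,j)) + (F' (j,k) - F (j,k))
      = (((k:ℝ) - (j:ℝ)) * (lam₂^k * lam₁^j - lam₁^k * lam₂^j)) * (coefA g h k * coefA g h j) := by
    intro k j
    simp only [F, F', crossF]
    ring
  have Hnn : ∀ p : ℕ×ℕ, 0 ≤ (F' p - F p) + (F' p.swap - F p.swap) := by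
    rintro ⟨k, j⟩
    simp only [Prod.swap_prod_mk]
    rw [hident k j]
    exact mul_nonneg (key_nonneg lam₁ lam₂ h₁ h₁₂.le k j)
      (mul_nonneg (apos k).le (apos j).le)
  have Hpos : 0 < (F' (1,0) - F (1,0)) + (F' ((1,0) : ℕ×ℕ).swap - F ((1,0) : ℕ×ℕ).swap) := by
    simp only [Prod.swap_prod_mk]
    rw [hident 1 0]
    simp only [Nat.cast_one, Nat.cast_zero, pow_one, pow_zero, coefA_zero]
    nlinarith [apos 1, sub_pos.mpr h₁₂]
  have SH : Summable (fun p : ℕ×ℕ => (F' p - F p) + (F' p.swap - F p.swap)) := SG.add SGswap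
  have hsumpos : 0 < ∑' p : ℕ×ℕ, ((F' p - F p) + (F' p.swap - F p.swap)) :=
    Summable.tsum_pos SH Hnn (1,0) Hpos
  have hadd : ∑' p : ℕ×ℕ, ((F' p - F p) + (F' p.swap - F p.swap))
      = (∑' p : ℕ×ℕ, (F' p - F p)) + ∑' p : ℕ×ℕ, (F' p.swap - F p.swap) := Summable.tsum_add SG SGswap
  rw [hadd, hswap] at hsumpos
  have hGpos : 0 < ∑' p : ℕ×ℕ, (F' p - F p) := by linarith
  have hsub : ∑' p : ℕ×ℕ, (F' p - F p) = (∑' p : ℕ×ℕ, F' p) - ∑' p : ℕ×ℕ, F p :=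
    Summable.tsum_sub SF' SF
  rw [eF, eF']
  rw [hsub] at hGpos
  linarith

/-- The mean `ρ(λ) = Σ_k k Θ_λ({k})` of the measure `Θ_λ` is
strictly increasing on `[0, λ_c)`. -/
theorem mean_strictMono
    (g h : ℕ → ℝ) (hg0 : g 0 = 0) (hg : ∀ k : ℕ, 1 ≤ k → 0 < g k) (hh : ∀ k : ℕ, 0 < h k)
    (lam₁ lam₂ : ℝ) (h₁ : 0 ≤ lam₁) (h₁₂ : lam₁ < lam₂)
    (h₂c : (lam₂ : EReal) < lamCrit g h) :
    (∑' k : ℕ, (k : ℝ) * thetaPMF g h lam₁ k)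
      < ∑' k : ℕ, (k : ℝ) * thetaPMF g h lam₂ k := by
  have h2 : 0 ≤ lam₂ := h₁.trans h₁₂.le
  have apos : ∀ k, 0 < coefA g h k := coefA_pos g h hg hh
  -- extract a real threshold c with lam₂ < c and eventually c < g(k+1)/h k
  obtain ⟨ce, hce1, hce2⟩ := exists_between h₂c
  have hcet : ce ≠ ⊤ := fun hc => absurd (hc ▸ hce2) (not_lt.mpr le_top)
  have hceb : ce ≠ ⊥ := fun hc => absurd (hc ▸ hce1) (not_lt.mpr bot_le)
  have hcoe : ((ce.toReal : ℝ) : EReal) = ce := EReal.coe_toReal hcet hceb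
  set c := ce.toReal with hcdef
  have hlam2c : lam₂ < c := by rw [← EReal.coe_lt_coe_iff, hcoe]; exact hce1
  have hev : ∀ᶠ k in Filter.atTop, c < g (k+1) / h k := by
    have h' : ∀ᶠ k in Filter.atTop,
        ((c : ℝ) : EReal) < ((g (k + 1) / h k : ℝ) : EReal) :=
      Filter.eventually_lt_of_lt_liminf (by rw [hcoe]; exact hce2)
    filter_upwards [h'] with k hk
    exact EReal.coe_lt_coe_iff.mp hk
  have S1 := summable_main g h hg hh lam₁ c h₁ (h₁₂.trans hlam2c) hev
  have S2 := summable_main g h hg hh lam₂ c h2 hlam2c hev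
  have SZ1 : Summable (fun k : ℕ => coefA g h k * lam₁ ^ k) := by
    apply Summable.of_nonneg_of_le (fun k => by have := apos k; positivity) _ S1
    intro k
    have hx : (0:ℝ) ≤ coefA g h k * lam₁ ^ k := by have := apos k; positivity
    nlinarith [Nat.cast_nonneg (α := ℝ) k]
  have SZ2 : Summable (fun k : ℕ => coefA g h k * lam₂ ^ k) := by
    apply Summable.of_nonneg_of_le (fun k => by have := apos k; positivity) _ S2
    intro k
    have hx : (0:ℝ) ≤ coefA g h k * lam₂ ^ k := by have := apos k; positivity
    nlinarith [Nat.cast_nonneg (α := ℝ) k]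
  have SN1 : Summable (fun k : ℕ => (k:ℝ) * (coefA g h k * lam₁ ^ k)) := by
    apply Summable.of_nonneg_of_le (fun k => by have := apos k; positivity) _ S1
    intro k
    have hx : (0:ℝ) ≤ coefA g h k * lam₁ ^ k := by have := apos k; positivity
    nlinarith [Nat.cast_nonneg (α := ℝ) k]
  have SN2 : Summable (fun k : ℕ => (k:ℝ) * (coefA g h k * lam₂ ^ k)) := by
    apply Summable.of_nonneg_of_le (fun k => by have := apos k; positivity) _ S2
    intro k
    have hx : (0:ℝ) ≤ coefA g h k * lam₂ ^ k := by have := apos k; positivity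
    nlinarith [Nat.cast_nonneg (α := ℝ) k]
  have Z1pos : 0 < partZ g h lam₁ := by
    rw [partZ]
    refine Summable.tsum_pos SZ1 (fun i => by have := apos i; positivity) 0 ?_
    simp [coefA_zero]
  have Z2pos : 0 < partZ g h lam₂ := by
    rw [partZ]
    refine Summable.tsum_pos SZ2 (fun i => by have := apos i; positivity) 0 ?_
    simp [coefA_zero]
  have hrw : ∀ lam : ℝ, (∑' k : ℕ, (k:ℝ) * thetaPMF g h lam k)
      = (∑' k : ℕ, (k:ℝ) * (coefA g h k * lam ^ k)) / partZ g h lam := by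
    intro lam
    rw [← tsum_div_const]
    congr 1; funext k; rw [thetaPMF]; ring
  rw [hrw lam₁, hrw lam₂, div_lt_div_iff₀ Z1pos Z2pos, partZ, partZ]
  exact cross_lt g h hg hh lam₁ lam₂ h₁ h₁₂ SN1 SN2 SZ1 SZ2
end

section
/- The family (Θ_λ) is stochastically increasing in λ: for all λ_1, λ_2 with 0 ≤ λ_1 ≤ λ_2 < λ_c and every m ∈ ℕ, Θ_{λ_1}({k ∈ ℕ : k ≥ m}) ≤ Θ_{λ_2}({k ∈ ℕ : k ≥ m}). -/
open scoped BigOperators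

/-- The family `(Θ_λ)` is stochastically increasing in `λ`:
for `0 ≤ λ₁ ≤ λ₂ < λ_c` and every `m ∈ ℕ`,
`Θ_{λ₁}({k : k ≥ m}) ≤ Θ_{λ₂}({k : k ≥ m})`. -/
theorem theta_stochastically_increasing
    (g h : ℕ → ℝ) (hg0 : g 0 = 0) (hg : ∀ k : ℕ, 1 ≤ k → 0 < g k) (hh : ∀ k : ℕ, 0 < h k)
    (lam₁ lam₂ : ℝ) (h₁ : 0 ≤ lam₁) (h₁₂ : lam₁ ≤ lam₂)
    (h₂c : (lam₂ : EReal) < lamCrit g h) (m : ℕ) :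
    (∑' k : ℕ, Set.indicator {k : ℕ | m ≤ k} (thetaPMF g h lam₁) k)
      ≤ ∑' k : ℕ, Set.indicator {k : ℕ | m ≤ k} (thetaPMF g h lam₂) k := by
  have h₂ : 0 ≤ lam₂ := h₁.trans h₁₂
  -- positivity of coefficients
  have ha : ∀ k, 0 < coefA g h k := fun k => by
    unfold coefA
    apply div_pos
    · exact Finset.prod_pos fun j _ => hh j
    · exact Finset.prod_pos fun j _ => hg (j + 1) (Nat.le_add_left 1 j)
  -- summability at lam₂
  obtain ⟨r, hr₂, hrc⟩ := EReal.exists_between_coe_real h₂c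
  have hr₂' : lam₂ < r := by exact_mod_cast hr₂
  have hr0 : 0 < r := lt_of_le_of_lt h₂ hr₂'
  have hev : ∀ᶠ k in Filter.atTop, (r : EReal) < ((g (k + 1) / h k : ℝ) : EReal) :=
    Filter.eventually_lt_of_lt_liminf hrc
  have hsum₂ : Summable (fun k => coefA g h k * lam₂ ^ k) := by
    apply summable_of_ratio_norm_eventually_le (r := lam₂ / r)
      ((div_lt_one hr0).2 hr₂')
    filter_upwards [hev] with k hk
    have hk' : r < g (k + 1) / h k := by exact_mod_cast hk
    have hgk : 0 < g (k + 1) := hg (k + 1) (Nat.le_add_left 1 k)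
    have hhk : 0 < h k := hh k
    have hstep : coefA g h (k + 1) ≤ coefA g h k / r := by
      have : coefA g h (k + 1) = coefA g h k * (h k / g (k + 1)) := by
        unfold coefA
        rw [Finset.prod_range_succ, Finset.prod_range_succ]
        field_simp
      rw [this, div_eq_mul_inv]
      apply mul_le_mul_of_nonneg_left _ (ha k).le
      rw [← div_eq_mul_inv, div_le_iff₀ hgk, inv_mul_eq_div, le_div_iff₀ hr0]
      rw [lt_div_iff₀ hhk] at hk'
      nlinarith
    have h2k : (0:ℝ) ≤ lam₂ ^ k := pow_nonneg h₂ k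
    rw [Real.norm_eq_abs, Real.norm_eq_abs,
      abs_of_nonneg (mul_nonneg (ha _).le (by positivity)),
      abs_of_nonneg (mul_nonneg (ha _).le (by positivity))]
    calc coefA g h (k + 1) * lam₂ ^ (k + 1)
        = (coefA g h (k + 1) * lam₂) * lam₂ ^ k := by ring
      _ ≤ (coefA g h k / r * lam₂) * lam₂ ^ k := by
          apply mul_le_mul_of_nonneg_right _ h2k
          exact mul_le_mul_of_nonneg_right hstep h₂
      _ = lam₂ / r * (coefA g h k * lam₂ ^ k) := by ring
  have hsum₁ : Summable (fun k => coefA g h k * lam₁ ^ k) := by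
    apply Summable.of_nonneg_of_le
      (fun k => mul_nonneg (ha k).le (by positivity)) _ hsum₂
    intro k
    exact mul_le_mul_of_nonneg_left (pow_le_pow_left₀ h₁ h₁₂ k) (ha k).le
  -- positivity of Z
  have Zpos : ∀ lam : ℝ, 0 ≤ lam → Summable (fun k => coefA g h k * lam ^ k) →
      0 < partZ g h lam := by
    intro lam hlam hsum
    have h0 : (0:ℝ) < coefA g h 0 * lam ^ 0 := by simpa using ha 0
    calc (0:ℝ) < coefA g h 0 * lam ^ 0 := h0
      _ ≤ partZ g h lam := Summable.le_tsum hsum 0 fun j _ => mul_nonneg (ha j).le (by positivity)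
  have Z₁ := Zpos lam₁ h₁ hsum₁
  have Z₂ := Zpos lam₂ h₂ hsum₂
  -- rewrite tail sums
  set A : Set ℕ := {k : ℕ | m ≤ k}
  have hA : A = {x : ℕ | x ∉ Finset.range m} := by
    ext x; simp [A, Finset.mem_range, not_lt]
  have tail_eq : ∀ lam : ℝ,
      (∑' k : ℕ, Set.indicator A (thetaPMF g h lam) k)
        = (∑' k : {x : ℕ // x ∉ Finset.range m}, coefA g h (k : ℕ) * lam ^ (k : ℕ))
            / partZ g h lam := by
    intro lam
    rw [← tsum_subtype A (thetaPMF g h lam)]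
    rw [show (thetaPMF g h lam) = fun k => coefA g h k * lam ^ k / partZ g h lam from rfl]
    rw [tsum_div_const]
    congr 1
    rw [hA]
    rfl
  rw [tail_eq lam₁, tail_eq lam₂]
  set T₁ := ∑' k : {x : ℕ // x ∉ Finset.range m}, coefA g h (k : ℕ) * lam₁ ^ (k : ℕ)
  set T₂ := ∑' k : {x : ℕ // x ∉ Finset.range m}, coefA g h (k : ℕ) * lam₂ ^ (k : ℕ)
  set S₁ := ∑ k ∈ Finset.range m, coefA g h k * lam₁ ^ k
  set S₂ := ∑ k ∈ Finset.range m, coefA g h k * lam₂ ^ k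
  have hZ₁ : partZ g h lam₁ = S₁ + T₁ := (Summable.sum_add_tsum_subtype_compl hsum₁ (Finset.range m)).symm
  have hZ₂ : partZ g h lam₂ = S₂ + T₂ := (Summable.sum_add_tsum_subtype_compl hsum₂ (Finset.range m)).symm
  have hT₁sum : Summable (fun k : {x : ℕ // x ∉ Finset.range m} =>
      coefA g h (k : ℕ) * lam₁ ^ (k : ℕ)) := hsum₁.subtype _
  have hT₂sum : Summable (fun k : {x : ℕ // x ∉ Finset.range m} =>
      coefA g h (k : ℕ) * lam₂ ^ (k : ℕ)) := hsum₂.subtype _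
  have hT₁0 : 0 ≤ T₁ := tsum_nonneg fun k => mul_nonneg (ha _).le (by positivity)
  have hT₂0 : 0 ≤ T₂ := tsum_nonneg fun k => mul_nonneg (ha _).le (by positivity)
  -- key cross inequality: T₁ * S₂ ≤ T₂ * S₁
  have key : T₁ * S₂ ≤ T₂ * S₁ := by
    rw [show T₁ * S₂ = ∑' k : {x : ℕ // x ∉ Finset.range m},
        (coefA g h (k : ℕ) * lam₁ ^ (k : ℕ)) * S₂ from (hT₁sum.tsum_mul_right S₂).symm,
      show T₂ * S₁ = ∑' k : {x : ℕ // x ∉ Finset.range m},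
        (coefA g h (k : ℕ) * lam₂ ^ (k : ℕ)) * S₁ from (hT₂sum.tsum_mul_right S₁).symm]
    apply Summable.tsum_le_tsum _ (hT₁sum.mul_right S₂) (hT₂sum.mul_right S₁)
    rintro ⟨k, hk⟩
    have hmk : m ≤ k := by simpa [Finset.mem_range, not_lt] using hk
    simp only
    rw [mul_assoc, mul_assoc]
    apply mul_le_mul_of_nonneg_left _ (ha k).le
    simp only [S₁, S₂, Finset.mul_sum]
    apply Finset.sum_le_sum
    intro j hj
    have hjm : j < m := Finset.mem_range.mp hj
    have hjk : j ≤ k := hjm.le.trans hmk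
    obtain ⟨d, rfl⟩ : ∃ d, k = j + d := ⟨k - j, (Nat.add_sub_cancel' hjk).symm⟩
    have hd : lam₁ ^ d ≤ lam₂ ^ d := pow_le_pow_left₀ h₁ h₁₂ d
    calc lam₁ ^ (j + d) * (coefA g h j * lam₂ ^ j)
        = (coefA g h j * lam₁ ^ j * lam₂ ^ j) * lam₁ ^ d := by rw [pow_add]; ring
      _ ≤ (coefA g h j * lam₁ ^ j * lam₂ ^ j) * lam₂ ^ d := by
          apply mul_le_mul_of_nonneg_left hd
            (mul_nonneg (mul_nonneg (ha j).le (by positivity)) (by positivity))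
      _ = lam₂ ^ (j + d) * (coefA g h j * lam₁ ^ j) := by rw [pow_add]; ring
  -- conclude
  rw [div_le_div_iff₀ Z₁ Z₂, hZ₁, hZ₂]
  nlinarith [key]
end

section
/- Fix 0 ≤ λ < λ_c and write Θ = Θ_λ. For every function F : ℕ × ℕ → [0, ∞] the following identity of sums in [0, ∞] holds: Σ_{m ≥ 1, k ≥ 0} g(m) h(k) Θ({m}) Θ({k}) F(m−1, k+1) = Σ_{m ≥ 0, k ≥ 0} g(k) h(m) Θ({m}) Θ({k}) F(m, k). (Probabilistically: if X, Y are independent with law Θ, then E[g(X) h(Y) F(X−1, Y+1)] = E[g(Y) h(X) F(X, Y)]; this is the identity E_ν[f(η^{x,y}) g(η(x)) h(η(y))] = E_ν[f(η) g(η(y)) h(η(x))] used for the product measure ν.) -/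
open scoped BigOperators

lemma coefA_succ_mul (g h : ℕ → ℝ) (hg : ∀ k : ℕ, 1 ≤ k → 0 < g k) (m : ℕ) :
    g (m + 1) * coefA g h (m + 1) = h m * coefA g h m := by
  have hgm : g (m + 1) ≠ 0 := (hg (m + 1) (Nat.le_add_left 1 m)).ne'
  have hprod : (∏ j ∈ Finset.range m, g (j + 1)) ≠ 0 :=
    Finset.prod_ne_zero_iff.2 fun j _ => (hg (j + 1) (Nat.le_add_left 1 j)).ne'
  unfold coefA
  rw [Finset.prod_range_succ, Finset.prod_range_succ]
  field_simp

lemma key_theta (g h : ℕ → ℝ) (hg : ∀ k : ℕ, 1 ≤ k → 0 < g k) (lam : ℝ) (m : ℕ) :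
    g (m + 1) * thetaPMF g h lam (m + 1) = lam * (h m * thetaPMF g h lam m) := by
  unfold thetaPMF
  rw [mul_div_assoc', mul_div_assoc', mul_div_assoc', ← mul_assoc, ← mul_assoc,
    coefA_succ_mul g h hg m, pow_succ]
  ring_nf

/-- For `Θ = Θ_λ` with `0 ≤ λ < λ_c` and any `F : ℕ × ℕ → [0, ∞]`,
`Σ_{m ≥ 1, k ≥ 0} g(m) h(k) Θ({m}) Θ({k}) F(m−1, k+1)
  = Σ_{m ≥ 0, k ≥ 0} g(k) h(m) Θ({m}) Θ({k}) F(m, k)`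
as an identity of sums in `[0, ∞]`. -/
theorem exchange_identity
    (g h : ℕ → ℝ) (hg0 : g 0 = 0) (hg : ∀ k : ℕ, 1 ≤ k → 0 < g k) (hh : ∀ k : ℕ, 0 < h k)
    (lam : ℝ) (hlam0 : 0 ≤ lam) (hlamc : (lam : EReal) < lamCrit g h)
    (F : ℕ × ℕ → ENNReal) :
    (∑' p : ℕ × ℕ,
        if 1 ≤ p.1 then
          ENNReal.ofReal
              (g p.1 * h p.2 * thetaPMF g h lam p.1 * thetaPMF g h lam p.2)
            * F (p.1 - 1, p.2 + 1)
        else 0)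
    = ∑' p : ℕ × ℕ,
        ENNReal.ofReal
            (g p.2 * h p.1 * thetaPMF g h lam p.1 * thetaPMF g h lam p.2)
          * F p := by
  set θ := thetaPMF g h lam with hθ
  set G : ℕ × ℕ → ENNReal := fun p =>
    if 1 ≤ p.1 then
      ENNReal.ofReal (g p.1 * h p.2 * θ p.1 * θ p.2) * F (p.1 - 1, p.2 + 1)
    else 0 with hG
  set H : ℕ × ℕ → ENNReal := fun p =>
    ENNReal.ofReal (g p.2 * h p.1 * θ p.1 * θ p.2) * F p with hH
  have hi : Function.Injective (fun q : ℕ × ℕ => (q.1 + 1, q.2)) := by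
    intro a b hab
    simpa [Prod.ext_iff] using hab
  have hj : Function.Injective (fun q : ℕ × ℕ => (q.1, q.2 + 1)) := by
    intro a b hab
    simpa [Prod.ext_iff] using hab
  have hGsupp : Function.support G ⊆ Set.range (fun q : ℕ × ℕ => (q.1 + 1, q.2)) := by
    intro p hp
    rcases p with ⟨m, k⟩
    rcases m with _ | m
    · exfalso; apply hp; simp [hG]
    · exact ⟨(m, k), rfl⟩
  have hHsupp : Function.support H ⊆ Set.range (fun q : ℕ × ℕ => (q.1, q.2 + 1)) := by
    intro p hp
    rcases p with ⟨m, k⟩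
    rcases k with _ | k
    · exfalso; apply hp; simp [hH, hg0]
    · exact ⟨(m, k), rfl⟩
  rw [← hi.tsum_eq hGsupp, ← hj.tsum_eq hHsupp]
  refine tsum_congr fun q => ?_
  rcases q with ⟨m, k⟩
  simp only [hG, hH, if_pos (Nat.le_add_left 1 m)]
  have h1 : g (m + 1) * h k * θ (m + 1) * θ k
      = g (k + 1) * h m * θ m * θ (k + 1) := by
    have e1 := key_theta g h hg lam m
    have e2 := key_theta g h hg lam k
    rw [hθ]
    calc g (m + 1) * h k * thetaPMF g h lam (m + 1) * thetaPMF g h lam k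
        = (g (m + 1) * thetaPMF g h lam (m + 1)) * (h k * thetaPMF g h lam k) := by ring
      _ = (lam * (h m * thetaPMF g h lam m)) * (h k * thetaPMF g h lam k) := by rw [e1]
      _ = (lam * (h k * thetaPMF g h lam k)) * (h m * thetaPMF g h lam m) := by ring
      _ = (g (k + 1) * thetaPMF g h lam (k + 1)) * (h m * thetaPMF g h lam m) := by rw [e2]
      _ = g (k + 1) * h m * thetaPMF g h lam m * thetaPMF g h lam (k + 1) := by ring
  simp [h1]
end

section
/- Entropy particle bound (Lemma 4.1 in measure form): let n ≥ 1, γ > 0, and let θ be a probability measure on ℕ with M_γ := Σ_{k≥0} e^{γk} θ({k}) < ∞. Let ν = ⊗_{x ∈ ℤ^n} θ be the product probability measure on ℕ^{ℤ^n}. Let N ≥ 1, C > 0, C_1 > 0, let A ⊆ ℤ^n be a finite set with |A| ≤ C_1 N^n, and let μ be a probability measure on ℕ^{ℤ^n} with relative entropy H(μ | ν) ≤ C N^n. Then (1/N^n) ∫ Σ_{x ∈ A} η(x) dμ(η) ≤ (C_1 log M_γ + C)/γ. -/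
open MeasureTheory
open scoped BigOperators ENNReal

lemma young_ineq {s t : ℝ} (hs : 0 ≤ s) : s * t ≤ s * Real.log s - s + Real.exp t := by
  rcases eq_or_lt_of_le hs with h | h
  · rw [← h]; simpa using (Real.exp_pos t).le
  · have h1 := Real.add_one_le_exp (t - Real.log s)
    rw [Real.exp_sub, Real.exp_log h] at h1
    have h3 := mul_le_mul_of_nonneg_left h1 hs
    rw [mul_div_cancel₀ _ (ne_of_gt h)] at h3
    nlinarith

lemma tsum_pi_prod : ∀ (ι : Type) [Fintype ι] (g : ι → ℕ → ℝ≥0∞),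
    ∑' v : ι → ℕ, ∏ i, g i (v i) = ∏ i, ∑' k, g i k := by
  refine Fintype.induction_empty_option ?_ ?_ ?_
  · intro α β _ e hα
    letI : Fintype α := Fintype.ofEquiv β e.symm
    intro g
    have h1 := Equiv.tsum_eq (Equiv.arrowCongr e (Equiv.refl ℕ))
      (fun v : β → ℕ => ∏ i, g i (v i))
    rw [← h1]
    have h2 : ∀ u : α → ℕ, ∏ i, g i ((Equiv.arrowCongr e (Equiv.refl ℕ)) u i)
        = ∏ j, g (e j) (u j) := by
      intro u
      rw [← Equiv.prod_comp e fun i => g i ((Equiv.arrowCongr e (Equiv.refl ℕ)) u i)]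
      refine Finset.prod_congr rfl fun j _ => ?_
      simp [Equiv.arrowCongr]
    simp_rw [h2]
    rw [hα fun j => g (e j)]
    exact Equiv.prod_comp e fun i => ∑' k, g i k
  · intro g
    haveI : Unique (PEmpty → ℕ) := ⟨⟨fun x => x.elim⟩, fun f => funext fun x => x.elim⟩
    rw [tsum_eq_single (default : PEmpty → ℕ)
      (fun b hb => absurd (Subsingleton.elim b default) hb)]
    simp
  · intro α _ hα g
    have h1 := Equiv.tsum_eq (Equiv.piOptionEquivProd (β := fun _ : Option α => ℕ)).symm
      (fun v : Option α → ℕ => ∏ i, g i (v i))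
    rw [← h1]
    have h2 : ∀ p : ℕ × (α → ℕ),
        (∏ i, g i ((Equiv.piOptionEquivProd (β := fun _ : Option α => ℕ)).symm p i))
        = g none p.1 * ∏ j, g (some j) (p.2 j) := by
      intro p
      rw [Fintype.prod_option]
      simp [Equiv.piOptionEquivProd]
    simp_rw [h2]
    rw [ENNReal.tsum_prod']
    simp_rw [ENNReal.tsum_mul_left, ENNReal.tsum_mul_right]
    rw [hα fun j => g (some j), Fintype.prod_option]

lemma moment_calc
    (n : ℕ) (γ : ℝ)
    (θ : Measure ℕ) (Mγ : ℝ)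
    (hMγ : (∫⁻ k : ℕ, ENNReal.ofReal (Real.exp (γ * k)) ∂θ) = ENNReal.ofReal Mγ)
    (ν : Measure ((Fin n → ℤ) → ℕ))
    (hν : ∀ (S : Finset (Fin n → ℤ)) (vals : (Fin n → ℤ) → ℕ),
        ν {η | ∀ x ∈ S, η x = vals x} = ∏ x ∈ S, θ {vals x})
    (A : Finset (Fin n → ℤ)) :
    ∫⁻ η, ∏ x ∈ A, ENNReal.ofReal (Real.exp (γ * η x)) ∂ν
      = ENNReal.ofReal Mγ ^ A.card := by
  classical
  set π : ((Fin n → ℤ) → ℕ) → (A → ℕ) := fun η x => η x with hπ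
  have hπm : Measurable π := measurable_pi_lambda _ fun x => measurable_pi_apply _
  have hmap : ∀ v : A → ℕ, (ν.map π) {v} = ∏ x : A, θ {v x} := by
    intro v
    rw [Measure.map_apply hπm (MeasurableSet.singleton v)]
    have hset : π ⁻¹' {v}
        = {η | ∀ x ∈ A, η x = (fun y => if h : y ∈ A then v ⟨y, h⟩ else 0) x} := by
      ext η
      simp only [Set.mem_preimage, Set.mem_singleton_iff, Set.mem_setOf_eq, funext_iff, hπ]
      constructor
      · intro h x hx; rw [dif_pos hx]; exact h ⟨x, hx⟩
      · intro h x; have := h x.1 x.2; rwa [dif_pos x.2, Subtype.eta] at this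
    rw [hset, hν]
    rw [← Finset.prod_attach A (fun y => θ {if h : y ∈ A then v ⟨y, h⟩ else 0})]
    rw [show (Finset.univ : Finset A) = A.attach from rfl]
    refine Finset.prod_congr rfl fun x _ => ?_
    rw [dif_pos x.2, Subtype.eta]
  have hrw : ∀ η, ∏ x ∈ A, ENNReal.ofReal (Real.exp (γ * η x))
      = ∏ x : A, ENNReal.ofReal (Real.exp (γ * (π η x))) := by
    intro η
    rw [show (Finset.univ : Finset A) = A.attach from rfl]
    exact (Finset.prod_attach A fun y => ENNReal.ofReal (Real.exp (γ * η y))).symm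
  calc ∫⁻ η, ∏ x ∈ A, ENNReal.ofReal (Real.exp (γ * η x)) ∂ν
      = ∫⁻ v, (∏ x : A, ENNReal.ofReal (Real.exp (γ * v x))) ∂(ν.map π) := by
        rw [lintegral_map (measurable_of_countable _) hπm]; simp_rw [hrw]
    _ = ∑' v : A → ℕ, (∏ x : A, ENNReal.ofReal (Real.exp (γ * v x))) * (ν.map π) {v} :=
        lintegral_countable' _
    _ = ∑' v : A → ℕ, ∏ x : A, (ENNReal.ofReal (Real.exp (γ * v x)) * θ {v x}) := by
        simp_rw [hmap, Finset.prod_mul_distrib]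
    _ = ∏ x : A, ∑' k : ℕ, ENNReal.ofReal (Real.exp (γ * k)) * θ {k} :=
        tsum_pi_prod A (fun _ k => ENNReal.ofReal (Real.exp (γ * k)) * θ {k})
    _ = ∏ _x : A, ENNReal.ofReal Mγ := by
        refine Finset.prod_congr rfl fun x _ => ?_
        rw [← lintegral_countable' (fun k : ℕ => ENNReal.ofReal (Real.exp (γ * k))), hMγ]
    _ = ENNReal.ofReal Mγ ^ A.card := by
        rw [Finset.prod_const]
        congr 1
        rw [Finset.card_univ, Fintype.card_coe]

/-- Entropy particle bound. Let `θ` be a probability measure on `ℕ` with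
finite exponential moment `M_γ = Σ_k e^{γ k} θ({k})` for some `γ > 0`, and let
`ν = ⊗_{x ∈ ℤ^n} θ` be the product measure on configurations. If `A ⊆ ℤ^n` is finite
with `|A| ≤ C₁ N^n` and `μ` is a probability measure with relative entropy
`H(μ | ν) = ∫ (dμ/dν) log(dμ/dν) dν ≤ C N^n`, then
`(1/N^n) ∫ Σ_{x ∈ A} η(x) dμ ≤ (C₁ log M_γ + C)/γ`. -/
theorem entropy_particle_bound
    (n : ℕ) (hn : 0 < n) (γ : ℝ) (hγ : 0 < γ)
    (θ : Measure ℕ) [IsProbabilityMeasure θ]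
    (Mγ : ℝ)
    (hMγ : (∫⁻ k : ℕ, ENNReal.ofReal (Real.exp (γ * k)) ∂θ) = ENNReal.ofReal Mγ)
    (ν : Measure ((Fin n → ℤ) → ℕ)) [IsProbabilityMeasure ν]
    (hν : ∀ (S : Finset (Fin n → ℤ)) (vals : (Fin n → ℤ) → ℕ),
        ν {η | ∀ x ∈ S, η x = vals x} = ∏ x ∈ S, θ {vals x})
    (N : ℕ) (hN : 1 ≤ N) (C C₁ : ℝ) (hC : 0 < C) (hC₁ : 0 < C₁)
    (A : Finset (Fin n → ℤ)) (hA : (A.card : ℝ) ≤ C₁ * (N : ℝ) ^ n)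
    (μ : Measure ((Fin n → ℤ) → ℕ)) [IsProbabilityMeasure μ]
    (hac : μ ≪ ν)
    (hint : Integrable (fun η =>
        (μ.rnDeriv ν η).toReal * Real.log (μ.rnDeriv ν η).toReal) ν)
    (hent : (∫ η, (μ.rnDeriv ν η).toReal * Real.log (μ.rnDeriv ν η).toReal ∂ν)
        ≤ C * (N : ℝ) ^ n) :
    (∫⁻ η, (∑ x ∈ A, (η x : ℝ≥0∞)) ∂μ)
      ≤ ENNReal.ofReal (((C₁ * Real.log Mγ + C) / γ) * (N : ℝ) ^ n) := by
  classical
  -- notation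
  set S : ((Fin n → ℤ) → ℕ) → ℝ := fun η => ∑ x ∈ A, (η x : ℝ) with hSdef
  have hSm : Measurable S := by
    apply Finset.measurable_sum
    intro x _
    exact (measurable_of_countable (fun k : ℕ => (k : ℝ))).comp (measurable_pi_apply x)
  have hS0 : ∀ η, 0 ≤ S η := fun η => Finset.sum_nonneg fun x _ => Nat.cast_nonneg _
  set ρ : ((Fin n → ℤ) → ℕ) → ℝ := fun η => (μ.rnDeriv ν η).toReal with hρdef
  have hρm : Measurable ρ := (Measure.measurable_rnDeriv μ ν).ennreal_toReal
  have hρ0 : ∀ η, 0 ≤ ρ η := fun η => ENNReal.toReal_nonneg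
  -- Mγ ≥ 1
  have hM1 : 1 ≤ Mγ := by
    have h1 : (1 : ℝ≥0∞) ≤ ENNReal.ofReal Mγ := by
      rw [← hMγ]
      calc (1 : ℝ≥0∞) = ∫⁻ _, 1 ∂θ := by simp
        _ ≤ ∫⁻ k : ℕ, ENNReal.ofReal (Real.exp (γ * k)) ∂θ := by
            refine lintegral_mono fun k => ?_
            rw [show (1 : ℝ≥0∞) = ENNReal.ofReal 1 by simp]
            exact ENNReal.ofReal_le_ofReal (Real.one_le_exp (by positivity))
    exact_mod_cast ENNReal.one_le_ofReal.mp h1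
  have hM0 : (0 : ℝ) < Mγ := lt_of_lt_of_le one_pos hM1
  have hlogM : 0 ≤ Real.log Mγ := Real.log_nonneg hM1
  set c : ℝ := A.card * Real.log Mγ with hcdef
  have hc0 : 0 ≤ c := by positivity
  -- exponential moment of γ S - c equals 1
  have hmom := moment_calc n γ θ Mγ hMγ ν hν A
  have hEpt : ∀ η, ENNReal.ofReal (Real.exp (γ * S η - c))
      = ENNReal.ofReal (Real.exp (-c)) * ∏ x ∈ A, ENNReal.ofReal (Real.exp (γ * η x)) := by
    intro η
    rw [← ENNReal.ofReal_prod_of_nonneg (fun x _ => (Real.exp_pos _).le),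
      ← ENNReal.ofReal_mul (Real.exp_pos _).le, ← Real.exp_sum, ← Real.exp_add]
    congr 2
    rw [hSdef]
    rw [Finset.mul_sum]
    ring
  have hEmeas : Measurable fun η => Real.exp (γ * S η - c) :=
    ((hSm.const_mul γ).sub measurable_const).exp
  have hEint1 : ∫⁻ η, ENNReal.ofReal (Real.exp (γ * S η - c)) ∂ν = 1 := by
    simp_rw [hEpt]
    rw [lintegral_const_mul _ (by
      apply Finset.measurable_prod
      intro x _
      exact (measurable_of_countable (fun k : ℕ => ENNReal.ofReal (Real.exp (γ * k)))).comp
        (measurable_pi_apply x)), hmom]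
    rw [← ENNReal.ofReal_pow hM0.le, ← ENNReal.ofReal_mul (Real.exp_pos _).le]
    rw [show Real.exp (-c) * Mγ ^ A.card = 1 by
      rw [hcdef, ← Real.log_pow, Real.exp_neg, Real.exp_log (pow_pos hM0 _)]
      field_simp]
    simp
  -- E := exp(γ S - c) integrable with integral ≤ 1
  have hEintble : Integrable (fun η => Real.exp (γ * S η - c)) ν := by
    refine ⟨hEmeas.aestronglyMeasurable, ?_⟩
    rw [hasFiniteIntegral_iff_ofReal (Filter.Eventually.of_forall fun η => (Real.exp_pos _).le)]
    rw [hEint1]; exact ENNReal.one_lt_top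
  have hEle1 : ∫ η, Real.exp (γ * S η - c) ∂ν ≤ 1 := by
    rw [integral_eq_lintegral_of_nonneg_ae
      (Filter.Eventually.of_forall fun η => (Real.exp_pos _).le) hEmeas.aestronglyMeasurable]
    rw [hEint1]; simp
  -- integrability of ρ
  have hρint : Integrable ρ ν := Measure.integrable_toReal_rnDeriv
  have hρ1 : ∫ η, ρ η ∂ν = 1 := by
    rw [hρdef]
    rw [Measure.integral_toReal_rnDeriv hac]
    simp
  -- truncated bound
  have hkey : ∀ m : ℕ, ∫⁻ η, ENNReal.ofReal (min (γ * S η) m) ∂μ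
      ≤ ENNReal.ofReal (C * (N : ℝ) ^ n + c) := by
    intro m
    set f : ((Fin n → ℤ) → ℕ) → ℝ := fun η => min (γ * S η) m with hfdef
    have hfm : Measurable f := (hSm.const_mul γ).min measurable_const
    have hf0 : ∀ η, 0 ≤ f η := fun η => le_min (by positivity) (Nat.cast_nonneg m)
    have hfb : ∀ η, f η ≤ m := fun η => min_le_right _ _
    -- lintegral finite
    have hfin : ∫⁻ η, ENNReal.ofReal (f η) ∂μ ≠ ∞ := by
      have hb : ∫⁻ η, ENNReal.ofReal (f η) ∂μ ≤ ENNReal.ofReal m := by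
        refine le_trans (lintegral_mono fun η => ENNReal.ofReal_le_ofReal (hfb η)) ?_
        simp
      exact ne_of_lt (lt_of_le_of_lt hb ENNReal.ofReal_lt_top)
    have heq : ∫⁻ η, ENNReal.ofReal (f η) ∂μ = ENNReal.ofReal (∫ η, f η ∂μ) := by
      rw [integral_eq_lintegral_of_nonneg_ae
        (Filter.Eventually.of_forall hf0) hfm.aestronglyMeasurable]
      rw [ENNReal.ofReal_toReal hfin]
    rw [heq]
    apply ENNReal.ofReal_le_ofReal
    -- change of measure
    have hcm : ∫ η, f η ∂μ = ∫ η, ρ η * f η ∂ν := by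
      rw [← integral_rnDeriv_smul hac]
      simp [hρdef, smul_eq_mul]
    rw [hcm]
    -- pointwise bound
    have hpt : ∀ η, ρ η * f η ≤ ρ η * Real.log (ρ η) - ρ η + Real.exp (γ * S η - c) + c * ρ η := by
      intro η
      have h1 := young_ineq (t := f η - c) (hρ0 η)
      have h2 : Real.exp (f η - c) ≤ Real.exp (γ * S η - c) :=
        Real.exp_le_exp.mpr (by linarith [min_le_left (γ * S η) (m : ℝ)])
      nlinarith [hρ0 η]
    -- integrate
    have hlhs : Integrable (fun η => ρ η * f η) ν := by
      refine Integrable.mono (hρint.const_mul (m : ℝ)) (hρm.mul hfm).aestronglyMeasurable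
        (Filter.Eventually.of_forall fun η => ?_)
      rw [Real.norm_eq_abs, Real.norm_eq_abs, abs_of_nonneg (mul_nonneg (hρ0 η) (hf0 η)),
        abs_of_nonneg (by positivity : (0:ℝ) ≤ (m:ℝ) * ρ η)]
      rw [mul_comm ((m:ℝ)) (ρ η)]
      exact mul_le_mul_of_nonneg_left (hfb η) (hρ0 η)
    have i1 : Integrable (fun η => ρ η * Real.log (ρ η) - ρ η) ν := hint.sub hρint
    have i2 : Integrable (fun η => ρ η * Real.log (ρ η) - ρ η + Real.exp (γ * S η - c)) ν :=
      i1.add hEintble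
    have i3 : Integrable (fun η => c * ρ η) ν := hρint.const_mul c
    have hrhs : Integrable (fun η => ρ η * Real.log (ρ η) - ρ η + Real.exp (γ * S η - c)
        + c * ρ η) ν := i2.add i3
    calc ∫ η, ρ η * f η ∂ν
        ≤ ∫ η, (ρ η * Real.log (ρ η) - ρ η + Real.exp (γ * S η - c) + c * ρ η) ∂ν :=
          integral_mono hlhs hrhs hpt
      _ = (∫ η, ρ η * Real.log (ρ η) ∂ν) - (∫ η, ρ η ∂ν) + (∫ η, Real.exp (γ * S η - c) ∂ν)
          + c * ∫ η, ρ η ∂ν := by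
          rw [integral_add i2 i3, integral_add i1 hEintble, integral_sub hint hρint,
            integral_const_mul]
      _ ≤ C * (N : ℝ) ^ n - 1 + 1 + c * 1 := by
          rw [hρ1]
          have := hent
          gcongr
      _ = C * (N : ℝ) ^ n + c := by ring
  -- monotone convergence
  have hsum : ∀ η : (Fin n → ℤ) → ℕ, (∑ x ∈ A, (η x : ℝ≥0∞)) = ENNReal.ofReal (S η) := by
    intro η
    rw [hSdef, ENNReal.ofReal_sum_of_nonneg fun x _ => Nat.cast_nonneg _]
    refine Finset.sum_congr rfl fun x _ => ?_
    simp [ENNReal.ofReal_natCast]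
  have hmono : ∫⁻ η, ENNReal.ofReal (γ * S η) ∂μ ≤ ENNReal.ofReal (C * (N : ℝ) ^ n + c) := by
    have hsup : ∀ η, ENNReal.ofReal (γ * S η) = ⨆ m : ℕ, ENNReal.ofReal (min (γ * S η) m) := by
      intro η
      refine le_antisymm ?_ (iSup_le fun m => ENNReal.ofReal_le_ofReal (min_le_left _ _))
      obtain ⟨m, hm⟩ := exists_nat_ge (γ * S η)
      exact le_iSup_of_le m (by rw [min_eq_left hm])
    simp_rw [hsup]
    rw [lintegral_iSup (fun m => ((hSm.const_mul γ).min measurable_const).ennreal_ofReal)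
      (fun m m' hmm' η => ENNReal.ofReal_le_ofReal
        (min_le_min le_rfl (Nat.cast_le.mpr hmm')))]
    exact iSup_le hkey
  -- conclude
  simp_rw [hsum]
  have hscale : ENNReal.ofReal γ * ∫⁻ η, ENNReal.ofReal (S η) ∂μ
      ≤ ENNReal.ofReal (C * (N : ℝ) ^ n + c) := by
    rw [← lintegral_const_mul _ hSm.ennreal_ofReal]
    refine le_trans (le_of_eq (lintegral_congr fun η => ?_)) hmono
    rw [← ENNReal.ofReal_mul hγ.le]
  have hK : C * (N : ℝ) ^ n + c ≤ (C₁ * Real.log Mγ + C) * (N : ℝ) ^ n := by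
    have : c ≤ C₁ * (N : ℝ) ^ n * Real.log Mγ := by
      rw [hcdef]
      exact mul_le_mul_of_nonneg_right hA hlogM
    nlinarith
  have hfinal : ENNReal.ofReal γ * ∫⁻ η, ENNReal.ofReal (S η) ∂μ
      ≤ ENNReal.ofReal ((C₁ * Real.log Mγ + C) * (N : ℝ) ^ n) :=
    le_trans hscale (ENNReal.ofReal_le_ofReal hK)
  have hγ' : ENNReal.ofReal γ ≠ 0 := by
    simp [ENNReal.ofReal_eq_zero, not_le, hγ]
  have hdiv : (∫⁻ η, ENNReal.ofReal (S η) ∂μ)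
      ≤ ENNReal.ofReal ((C₁ * Real.log Mγ + C) * (N : ℝ) ^ n) / ENNReal.ofReal γ := by
    rw [ENNReal.le_div_iff_mul_le (Or.inl hγ') (Or.inl ENNReal.ofReal_ne_top), mul_comm]
    exact hfinal
  refine le_trans hdiv (le_of_eq ?_)
  rw [← ENNReal.ofReal_div_of_pos hγ]
  congr 1
  ring
end

section
/- Entropy truncation bound (Lemma 4.2 in measure form): let n ≥ 1 and let θ be a probability measure on ℕ with Σ_{k≥0} e^{γk} θ({k}) < ∞ for every γ > 0. Let ν = ⊗_{x ∈ ℤ^n} θ be the product probability measure on ℕ^{ℤ^n}, and fix constants C, R > 0. Then lim_{A → ∞} sup_{N ≥ 1} sup_μ (1/N^n) ∫ Σ_{x : |x| ≤ RN} η(x) · 1(η(x) > A) dμ(η) = 0, where |x| = max_{1 ≤ i ≤ n} |x_i| and the inner supremum is over all probability measures μ on ℕ^{ℤ^n} with relative entropy H(μ | ν) ≤ C N^n. -/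
open MeasureTheory
open scoped BigOperators ENNReal

open Filter
open scoped Topology



namespace EntropyTruncAux

lemma tsum_prod_fin (f : ℕ → ℝ≥0∞) : ∀ d : ℕ,
    (∑' v : Fin d → ℕ, ∏ i, f (v i)) = (∑' k, f k) ^ d
  | 0 => by
    rw [tsum_eq_single (fun i => i.elim0) (fun b hb => absurd (Subsingleton.elim b _) hb)]
    simp
  | (d+1) => by
    rw [← Equiv.tsum_eq (Fin.consEquiv (fun _ : Fin (d+1) => ℕ))
      (fun v => ∏ i, f (v i))]
    have hp : ∀ p : ℕ × (Fin d → ℕ),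
        (∏ i, f ((Fin.consEquiv (fun _ : Fin (d+1) => ℕ)) p i))
          = f p.1 * ∏ i, f (p.2 i) := by
      intro p
      rw [Fin.prod_univ_succ]
      simp [Fin.consEquiv]
    rw [tsum_congr hp]
    rw [ENNReal.tsum_prod']
    simp_rw [ENNReal.tsum_mul_left, ENNReal.tsum_mul_right]
    rw [tsum_prod_fin f d, pow_succ]
    ring

lemma tsum_prod_pi {ι : Type*} [Fintype ι] (f : ℕ → ℝ≥0∞) :
    (∑' v : ι → ℕ, ∏ i, f (v i)) = (∑' k, f k) ^ (Fintype.card ι) := by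
  classical
  set e : ι ≃ Fin (Fintype.card ι) := Fintype.equivFin ι with he
  set E : (Fin (Fintype.card ι) → ℕ) ≃ (ι → ℕ) := Equiv.arrowCongr e.symm (Equiv.refl ℕ) with hE
  rw [← Equiv.tsum_eq E (fun v : ι → ℕ => ∏ i, f (v i))]
  have hp : ∀ w : Fin (Fintype.card ι) → ℕ,
      (∏ i, f (E w i)) = ∏ j, f (w j) := by
    intro w
    have h1 : ∀ i, E w i = w (e i) := fun i => rfl
    calc (∏ i, f (E w i)) = ∏ i, f (w (e i)) := by simp_rw [h1]
    _ = ∏ j, f (w j) := Equiv.prod_comp e (fun j => f (w j))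
  rw [tsum_congr hp]
  exact tsum_prod_fin f _






lemma tsum_ite_gt (f : ℕ → ℝ≥0∞) (A : ℕ) :
    (∑' k, if A < k then f k else 0) = ∑' j, f (j + (A + 1)) := by
  classical
  have h1 : (∑' k, if A < k then f k else 0) = ∑' k : {k : ℕ | A < k}, f ↑k := by
    rw [tsum_subtype]
    refine tsum_congr fun k => ?_
    simp [Set.indicator_apply, Set.mem_setOf_eq]
  rw [h1]
  let e : ℕ ≃ {k : ℕ | A < k} :=
    ⟨fun j => ⟨j + (A + 1), by simp only [Set.mem_setOf_eq]; omega⟩,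
     fun k => k.1 - (A + 1),
     fun j => by simp,
     fun k => by
       rcases k with ⟨k, hk⟩
       simp only [Set.mem_setOf_eq] at hk
       simp only [Subtype.mk.injEq]
       omega⟩
  exact (Equiv.tsum_eq e fun k : {k : ℕ | A < k} => f ↑k).symm

lemma tsum_singleton_measure (θ : Measure ℕ) [IsProbabilityMeasure θ] :
    (∑' k, θ {k}) = 1 := by
  calc (∑' k, θ {k}) = ∑' k : ℕ, (fun _ : ℕ => (1:ℝ≥0∞)) k * θ {k} := by simp
  _ = ∫⁻ _, 1 ∂θ := (lintegral_countable' _).symm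
  _ = 1 := by simp

lemma real_entropy_pointwise (a b : ℝ) (ha : 0 ≤ a) :
    a * b ≤ a * Real.log a - a + Real.exp b := by
  rcases ha.eq_or_lt with h0 | hpos
  · rw [← h0]
    simp only [zero_mul, sub_zero, zero_sub, neg_zero, zero_add]
    positivity
  · have h1 : b - Real.log a + 1 ≤ Real.exp (b - Real.log a) := by
      have := Real.add_one_le_exp (b - Real.log a); linarith
    have h2 : Real.exp (b - Real.log a) = Real.exp b / a := by
      rw [Real.exp_sub, Real.exp_log hpos]
    rw [h2] at h1
    have h3 := mul_le_mul_of_nonneg_left h1 hpos.le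
    have h4 : a * (Real.exp b / a) = Real.exp b := by
      field_simp
    rw [h4] at h3
    nlinarith

def hfn (A M k : ℕ) : ℝ := if A < k then ((min k M : ℕ) : ℝ) else 0

lemma hfn_nonneg (A M k : ℕ) : 0 ≤ hfn A M k := by
  unfold hfn; split <;> positivity

lemma hfn_le (A M k : ℕ) : hfn A M k ≤ M := by
  unfold hfn; split
  · exact_mod_cast Nat.cast_le.mpr (min_le_right _ _)
  · positivity

lemma hfn_le_self (A M k : ℕ) : hfn A M k ≤ (k : ℝ) := by
  unfold hfn; split
  · exact_mod_cast Nat.cast_le.mpr (min_le_left _ _)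
  · positivity

lemma hfn_mono (A k : ℕ) : Monotone fun M => ENNReal.ofReal (hfn A M k) := by
  intro M M' hMM'
  unfold hfn
  split
  · exact ENNReal.ofReal_le_ofReal
      (by exact_mod_cast Nat.cast_le.mpr (min_le_min le_rfl hMM'))
  · exact le_rfl

lemma isup_ofReal_hfn (A k : ℕ) :
    (⨆ M : ℕ, ENNReal.ofReal (hfn A M k)) = if A < k then (k : ℝ≥0∞) else 0 := by
  unfold hfn
  by_cases hk : A < k
  · simp only [if_pos hk]
    apply le_antisymm
    · refine iSup_le fun M => ?_
      rw [ENNReal.ofReal_natCast]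
      exact_mod_cast Nat.cast_le.mpr (min_le_left k M)
    · refine le_trans ?_ (le_iSup (fun M => ENNReal.ofReal ((min k M : ℕ) : ℝ)) k)
      rw [ENNReal.ofReal_natCast, min_self]
  · simp [if_neg hk]







lemma lintegral_prod_eval {n : ℕ} (θ : Measure ℕ) (ν : Measure ((Fin n → ℤ) → ℕ))
    (hν : ∀ (S : Finset (Fin n → ℤ)) (vals : (Fin n → ℤ) → ℕ),
        ν {η | ∀ x ∈ S, η x = vals x} = ∏ x ∈ S, θ {vals x})
    (B : Finset (Fin n → ℤ)) (g : ℕ → ℝ≥0∞) :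
    (∫⁻ η, ∏ x ∈ B, g (η x) ∂ν) = (∑' k, g k * θ {k}) ^ B.card := by
  classical
  set Ev : ({x // x ∈ B} → ℕ) → Set ((Fin n → ℤ) → ℕ) :=
    fun v => {η | ∀ x : {x // x ∈ B}, η ↑x = v x} with hEv
  have hEvMeas : ∀ v, MeasurableSet (Ev v) := by
    intro v
    have h : Ev v = ⋂ x : {x // x ∈ B},
        (fun η : (Fin n → ℤ) → ℕ => η ↑x) ⁻¹' {v x} := by
      ext η; simp [hEv, Set.mem_iInter, Set.mem_preimage]
    rw [h]
    exact MeasurableSet.iInter fun x =>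
      (measurable_pi_apply (↑x : Fin n → ℤ)) (measurableSet_singleton (v x))
  have hdecomp : ∀ η, (∏ x ∈ B, g (η x))
      = ∑' v : {x // x ∈ B} → ℕ,
          (∏ x : {x // x ∈ B}, g (v x)) * (Ev v).indicator 1 η := by
    intro η
    rw [tsum_eq_single (fun x : {x // x ∈ B} => η ↑x) ?_]
    · rw [Set.indicator_of_mem (show η ∈ Ev (fun x => η ↑x) from fun x => rfl) (1 : ((Fin n → ℤ) → ℕ) → ℝ≥0∞)]
      rw [Pi.one_apply, mul_one]
      exact (Finset.prod_coe_sort B (fun x => g (η x))).symm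
    · intro v hv
      rw [Set.indicator_of_notMem, mul_zero]
      intro hmem
      exact hv (funext fun x => (hmem x).symm)
  calc (∫⁻ η, ∏ x ∈ B, g (η x) ∂ν)
      = ∫⁻ η, ∑' v : {x // x ∈ B} → ℕ,
          (∏ x : {x // x ∈ B}, g (v x)) * (Ev v).indicator 1 η ∂ν :=
        lintegral_congr hdecomp
    _ = ∑' v : {x // x ∈ B} → ℕ,
          ∫⁻ η, (∏ x : {x // x ∈ B}, g (v x)) * (Ev v).indicator 1 η ∂ν :=
        lintegral_tsum fun v =>
          ((measurable_one.indicator (hEvMeas v)).const_mul _).aemeasurable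
    _ = ∑' v : {x // x ∈ B} → ℕ,
          (∏ x : {x // x ∈ B}, g (v x)) * ν (Ev v) := by
        refine tsum_congr fun v => ?_
        rw [lintegral_const_mul _ (measurable_one.indicator (hEvMeas v)),
          lintegral_indicator_one (hEvMeas v)]
    _ = ∑' v : {x // x ∈ B} → ℕ,
          ∏ x : {x // x ∈ B}, (g (v x) * θ {v x}) := by
        refine tsum_congr fun v => ?_
        have h1 : Ev v = {η : (Fin n → ℤ) → ℕ |
            ∀ x ∈ B, η x = (fun x => if h : x ∈ B then v ⟨x, h⟩ else 0) x} := by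
          ext η
          simp only [hEv, Set.mem_setOf_eq]
          constructor
          · intro hmem x hx
            simp only [dif_pos hx]
            exact hmem ⟨x, hx⟩
          · intro hmem x
            have h2 := hmem ↑x x.2
            simpa only [dif_pos x.2] using h2
        rw [h1, hν B _]
        rw [Finset.prod_mul_distrib]
        congr 1
        rw [← Finset.prod_coe_sort B
          (fun x => θ {(fun x => if h : x ∈ B then v ⟨x, h⟩ else 0) x})]
        refine Finset.prod_congr rfl fun x _ => ?_
        simp only [dif_pos x.2]
    _ = (∑' k, g k * θ {k}) ^ (Fintype.card {x // x ∈ B}) :=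
        tsum_prod_pi (fun k => g k * θ {k})
    _ = (∑' k, g k * θ {k}) ^ B.card := by rw [Fintype.card_coe]



end EntropyTruncAux

open EntropyTruncAux

set_option maxHeartbeats 2000000 in

/-- Entropy truncation bound. Let `θ` be a probability measure on `ℕ`
with all exponential moments finite, `ν = ⊗_{x ∈ ℤ^n} θ`, and fix `C, R > 0`. Then,
uniformly over `N ≥ 1` and over probability measures `μ` with relative entropy
`H(μ | ν) ≤ C N^n`, the truncated particle averages
`(1/N^n) ∫ Σ_{|x| ≤ RN} η(x) 1(η(x) > A) dμ` tend to `0` as `A → ∞`. -/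
theorem entropy_truncation_bound
    (n : ℕ) (hn : 0 < n)
    (θ : Measure ℕ) [IsProbabilityMeasure θ]
    (hexp : ∀ γ : ℝ, 0 < γ → (∫⁻ k : ℕ, ENNReal.ofReal (Real.exp (γ * k)) ∂θ) < ⊤)
    (ν : Measure ((Fin n → ℤ) → ℕ)) [IsProbabilityMeasure ν]
    (hν : ∀ (S : Finset (Fin n → ℤ)) (vals : (Fin n → ℤ) → ℕ),
        ν {η | ∀ x ∈ S, η x = vals x} = ∏ x ∈ S, θ {vals x})
    (C R : ℝ) (hC : 0 < C) (hR : 0 < R) :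
    ∀ ε : ℝ, 0 < ε → ∃ A₀ : ℕ, ∀ A : ℕ, A₀ ≤ A →
      ∀ N : ℕ, 1 ≤ N →
      ∀ μ : Measure ((Fin n → ℤ) → ℕ), IsProbabilityMeasure μ → μ ≪ ν →
        Integrable (fun η =>
          (μ.rnDeriv ν η).toReal * Real.log (μ.rnDeriv ν η).toReal) ν →
        (∫ η, (μ.rnDeriv ν η).toReal * Real.log (μ.rnDeriv ν η).toReal ∂ν)
            ≤ C * (N : ℝ) ^ n →
        (∫⁻ η, (∑' x : Fin n → ℤ,
            Set.indicator {x : Fin n → ℤ | ∀ i, |(x i : ℝ)| ≤ R * N}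
              (fun x => if A < η x then (η x : ℝ≥0∞) else 0) x) ∂μ)
          ≤ ENNReal.ofReal (ε * (N : ℝ) ^ n) := by
  intro ε hε
  have hcR : (0:ℝ) < (2*R+1)^n := by positivity
  set cR : ℝ := (2*R+1)^n with hcRdef
  set γ : ℝ := (C+1)/ε with hγdef
  have hγ : 0 < γ := by positivity
  set τ : ℝ := 1/cR with hτdef
  have hτ : 0 < τ := by positivity
  set Sf : ℕ → ℝ≥0∞ := fun k => ENNReal.ofReal (Real.exp (γ * k)) * θ {k} with hSfdef
  have hSf_ne : (∑' k, Sf k) ≠ ∞ := by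
    have h1 := lintegral_countable' (fun k : ℕ => ENNReal.ofReal (Real.exp (γ * k))) (μ := θ)
    have h2 := (hexp γ hγ).ne
    rw [h1] at h2
    exact h2
  have htend : Tendsto (fun A : ℕ => ∑' k, Sf (k + (A+1))) atTop (𝓝 0) :=
    (ENNReal.tendsto_sum_nat_add Sf hSf_ne).comp (tendsto_add_atTop_nat 1)
  have hev := htend.eventually_lt_const
    (show (0:ℝ≥0∞) < ENNReal.ofReal τ from ENNReal.ofReal_pos.mpr hτ)
  obtain ⟨A₀, hA₀⟩ := Filter.eventually_atTop.mp hev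
  refine ⟨A₀, fun A hA N hN μ hμprob hμν hint hH => ?_⟩
  have hN1 : (1:ℝ) ≤ (N:ℝ) := by exact_mod_cast hN
  have hNpos : (0:ℝ) < (N:ℝ) := by linarith
  set m : ℤ := ⌊R * (N:ℝ)⌋ with hmdef
  have hm0 : 0 ≤ m := Int.floor_nonneg.mpr (by positivity)
  set B : Finset (Fin n → ℤ) := Fintype.piFinset (fun _ : Fin n => Finset.Icc (-m) m)
    with hBdef
  -- cardinality bound
  have hIccCard : (Finset.Icc (-m) m).card = (2*m+1).toNat := by
    rw [Int.card_Icc]; congr 1; ring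
  have hcard : (B.card : ℝ) ≤ cR * (N:ℝ)^n := by
    have h1 : B.card = ((2*m+1).toNat)^n := by
      rw [hBdef, Fintype.card_piFinset]
      simp [hIccCard]
    have h2 : (((2*m+1).toNat : ℕ) : ℝ) = 2*(m:ℝ)+1 := by
      have h3 : (((2*m+1).toNat : ℕ) : ℤ) = 2*m+1 := Int.toNat_of_nonneg (by omega)
      calc (((2*m+1).toNat : ℕ) : ℝ) = ((((2*m+1).toNat : ℕ) : ℤ) : ℝ) := by push_cast; ring
      _ = ((2*m+1 : ℤ) : ℝ) := by rw [h3]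
      _ = 2*(m:ℝ)+1 := by push_cast; ring
    have h3 : (m:ℝ) ≤ R * N := Int.floor_le _
    have h4 : (2*(m:ℝ)+1) ≤ (2*R+1)*N := by nlinarith
    calc (B.card : ℝ) = (((2*m+1).toNat : ℕ) : ℝ)^n := by rw [h1]; push_cast; ring
    _ ≤ ((2*R+1)*N)^n := by
        apply pow_le_pow_left₀ (Nat.cast_nonneg _)
        rw [h2]; exact h4
    _ = cR * (N:ℝ)^n := by rw [hcRdef, mul_pow]
  -- the box as a set
  have hSB : {x : Fin n → ℤ | ∀ i, |(x i : ℝ)| ≤ R * N} = ↑B := by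
    ext x
    simp only [Set.mem_setOf_eq, hBdef, Finset.mem_coe, Fintype.mem_piFinset,
      Finset.mem_Icc]
    constructor
    · intro h i
      have hi : |(x i : ℝ)| ≤ R * N := h i
      have h2 : ((|x i| : ℤ) : ℝ) ≤ R * N := by rwa [Int.cast_abs]
      have h3 : |x i| ≤ m := Int.le_floor.mpr h2
      exact abs_le.mp h3
    · intro h i
      have h3 : |x i| ≤ m := abs_le.mpr (h i)
      calc |(x i : ℝ)| = ((|x i| : ℤ) : ℝ) := by rw [Int.cast_abs]
      _ ≤ (m : ℝ) := by exact_mod_cast h3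
      _ ≤ R * N := Int.floor_le _
  -- tail bound
  have htail : (∑' k, if A < k then Sf k else 0) ≤ ENNReal.ofReal τ := by
    rw [tsum_ite_gt]
    exact (hA₀ A hA).le
  -- per-truncation entropy bound
  have key : ∀ M : ℕ,
      (∫⁻ η, ∑ x ∈ B, ENNReal.ofReal (hfn A M (η x)) ∂μ)
        ≤ ENNReal.ofReal (ε * (N:ℝ)^n) := by
    intro M
    have hmeas_h : Measurable (hfn A M) := Measurable.of_discrete
    set G : ((Fin n → ℤ) → ℕ) → ℝ := fun η => ∑ x ∈ B, hfn A M (η x) with hGdef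
    have hGmeas : Measurable G :=
      Finset.measurable_sum _ fun x _ => hmeas_h.comp (measurable_pi_apply x)
    have hG0 : ∀ η, 0 ≤ G η := fun η => Finset.sum_nonneg fun x _ => hfn_nonneg _ _ _
    have hGle : ∀ η, G η ≤ (B.card : ℝ) * M := fun η => by
      calc G η ≤ ∑ _x ∈ B, (M:ℝ) := Finset.sum_le_sum fun x _ => hfn_le _ _ _
      _ = B.card * M := by rw [Finset.sum_const, nsmul_eq_mul]
    set gg : ℕ → ℝ≥0∞ := fun k => ENNReal.ofReal (Real.exp (γ * hfn A M k)) with hggdef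
    set zm : ℝ≥0∞ := ∑' k, gg k * θ {k} with hzmdef
    have hzm_le : zm ≤ 1 + ENNReal.ofReal τ := by
      have hpt : ∀ k, gg k * θ {k} ≤ θ {k} + (if A < k then Sf k else 0) := by
        intro k
        by_cases hk : A < k
        · rw [if_pos hk]
          calc gg k * θ {k} ≤ ENNReal.ofReal (Real.exp (γ * k)) * θ {k} := by
                refine mul_le_mul_left (ENNReal.ofReal_le_ofReal
                  (Real.exp_le_exp.mpr ?_)) _
                exact mul_le_mul_of_nonneg_left (hfn_le_self A M k) hγ.le
            _ = Sf k := rfl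
            _ ≤ θ {k} + Sf k := le_add_self
        · rw [if_neg hk, add_zero]
          have h0 : hfn A M k = 0 := if_neg hk
          rw [hggdef]
          simp only [h0, mul_zero, Real.exp_zero, ENNReal.ofReal_one, one_mul, le_refl]
      calc zm ≤ ∑' k, (θ {k} + (if A < k then Sf k else 0)) := ENNReal.tsum_le_tsum hpt
      _ = (∑' k, θ {k}) + ∑' k, (if A < k then Sf k else 0) := ENNReal.tsum_add
      _ ≤ 1 + ENNReal.ofReal τ := by
          rw [tsum_singleton_measure]
          exact add_le_add le_rfl htail
    have hzm_ge : 1 ≤ zm := by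
      conv_lhs => rw [← tsum_singleton_measure θ]
      refine ENNReal.tsum_le_tsum fun k => ?_
      conv_lhs => rw [← one_mul (θ {k})]
      refine mul_le_mul_left ?_ _
      rw [hggdef]
      refine le_trans ?_ (ENNReal.ofReal_le_ofReal
        (Real.one_le_exp (mul_nonneg hγ.le (hfn_nonneg A M k))))
      simp
    have hzm_ne : zm ≠ ∞ :=
      ne_top_of_le_ne_top (by simp [ENNReal.add_ne_top]) hzm_le
    set zr : ℝ := zm.toReal with hzrdef
    have hzr1 : 1 ≤ zr := by
      rw [hzrdef, ← ENNReal.toReal_one]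
      exact ENNReal.toReal_mono hzm_ne hzm_ge
    have hzrle : zr ≤ 1 + τ := by
      rw [hzrdef]
      calc zm.toReal ≤ (1 + ENNReal.ofReal τ).toReal :=
            ENNReal.toReal_mono (by simp [ENNReal.add_ne_top]) hzm_le
      _ = 1 + τ := by
          rw [ENNReal.toReal_add ENNReal.one_ne_top ENNReal.ofReal_ne_top,
            ENNReal.toReal_one, ENNReal.toReal_ofReal hτ.le]
    have hzrpos : 0 < zr := by linarith
    -- lintegral product identity
    have hprod : (∫⁻ η, ENNReal.ofReal (Real.exp (γ * G η)) ∂ν) = zm ^ B.card := by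
      have hpt : ∀ η, ENNReal.ofReal (Real.exp (γ * G η)) = ∏ x ∈ B, gg (η x) := by
        intro η
        rw [hGdef]
        simp only
        rw [Finset.mul_sum, Real.exp_sum,
          ENNReal.ofReal_prod_of_nonneg (fun x _ => (Real.exp_pos _).le)]
      rw [lintegral_congr hpt, hzmdef]
      exact lintegral_prod_eval θ ν hν B gg
    have hexpG_meas : Measurable fun η => Real.exp (γ * G η) :=
      Real.measurable_exp.comp (hGmeas.const_mul γ)
    have hIexp : (∫ η, Real.exp (γ * G η) ∂ν) = zr ^ B.card := by
      rw [integral_eq_lintegral_of_nonneg_ae (ae_of_all _ fun η => (Real.exp_pos _).le)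
        hexpG_meas.aestronglyMeasurable]
      rw [hprod, ENNReal.toReal_pow, hzrdef]
    set W : ℝ := zr ^ B.card with hWdef
    have hW1 : 1 ≤ W := by
      rw [hWdef]
      calc (1:ℝ) = 1 ^ B.card := (one_pow _).symm
      _ ≤ zr ^ B.card := pow_le_pow_left₀ one_pos.le hzr1 _
    have hWpos : 0 < W := lt_of_lt_of_le one_pos hW1
    set L : ℝ := Real.log W with hLdef
    have hL0 : 0 ≤ L := Real.log_nonneg hW1
    have hLle : L ≤ (B.card : ℝ) * τ := by
      rw [hLdef, hWdef, Real.log_pow]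
      refine mul_le_mul_of_nonneg_left ?_ (Nat.cast_nonneg _)
      calc Real.log zr ≤ zr - 1 := Real.log_le_sub_one_of_pos hzrpos
      _ ≤ τ := by linarith
    -- entropy inequality
    have hfR_meas : Measurable fun η => (μ.rnDeriv ν η).toReal :=
      (Measure.measurable_rnDeriv μ ν).ennreal_toReal
    have hfR0 : ∀ η, (0:ℝ) ≤ (μ.rnDeriv ν η).toReal := fun η => ENNReal.toReal_nonneg
    have hfR_int : Integrable (fun η => (μ.rnDeriv ν η).toReal) ν :=
      Measure.integrable_toReal_rnDeriv
    have hfR_integral : (∫ η, (μ.rnDeriv ν η).toReal ∂ν) = 1 := by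
      rw [Measure.integral_toReal_rnDeriv hμν]
      simp
    have key_pt : ∀ η, (μ.rnDeriv ν η).toReal * (γ * G η - L)
        ≤ (μ.rnDeriv ν η).toReal * Real.log (μ.rnDeriv ν η).toReal
          - (μ.rnDeriv ν η).toReal + Real.exp (γ * G η - L) :=
      fun η => real_entropy_pointwise _ _ (hfR0 η)
    have hfRG_int : Integrable (fun η => (μ.rnDeriv ν η).toReal * G η) ν := by
      refine Integrable.mono' (hfR_int.const_mul ((B.card : ℝ) * M))
        (hfR_meas.mul hGmeas).aestronglyMeasurable (ae_of_all _ fun η => ?_)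
      rw [Real.norm_eq_abs, abs_of_nonneg (mul_nonneg (hfR0 η) (hG0 η))]
      calc (μ.rnDeriv ν η).toReal * G η
          ≤ (μ.rnDeriv ν η).toReal * ((B.card : ℝ) * M) :=
            mul_le_mul_of_nonneg_left (hGle η) (hfR0 η)
      _ = (B.card : ℝ) * M * (μ.rnDeriv ν η).toReal := mul_comm _ _
    have hlhs_int : Integrable (fun η => (μ.rnDeriv ν η).toReal * (γ * G η - L)) ν := by
      have h1 : (fun η => (μ.rnDeriv ν η).toReal * (γ * G η - L))
          = fun η => γ * ((μ.rnDeriv ν η).toReal * G η)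
            - L * (μ.rnDeriv ν η).toReal := funext fun η => by ring
      rw [h1]
      exact (hfRG_int.const_mul γ).sub (hfR_int.const_mul L)
    have hE_meas : Measurable fun η => Real.exp (γ * G η - L) :=
      Real.measurable_exp.comp ((hGmeas.const_mul γ).sub measurable_const)
    have hE_int : Integrable (fun η => Real.exp (γ * G η - L)) ν := by
      refine Integrable.mono' (integrable_const (Real.exp (γ * ((B.card:ℝ)*M))))
        hE_meas.aestronglyMeasurable (ae_of_all _ fun η => ?_)
      rw [Real.norm_eq_abs, abs_of_nonneg (Real.exp_pos _).le]
      refine Real.exp_le_exp.mpr ?_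
      have h2 := mul_le_mul_of_nonneg_left (hGle η) hγ.le
      linarith
    have hE_integral : (∫ η, Real.exp (γ * G η - L) ∂ν) = 1 := by
      have h1 : (fun η => Real.exp (γ * G η - L))
          = fun η => Real.exp (γ * G η) / W := by
        funext η
        rw [Real.exp_sub, hLdef, Real.exp_log hWpos]
      rw [h1, integral_div, hIexp, div_self hWpos.ne']
    have hrhs_int : Integrable (fun η =>
        (μ.rnDeriv ν η).toReal * Real.log (μ.rnDeriv ν η).toReal
          - (μ.rnDeriv ν η).toReal + Real.exp (γ * G η - L)) ν :=
      (hint.sub hfR_int).add hE_int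
    have hmono := integral_mono hlhs_int hrhs_int key_pt
    have hlhs_eq : (∫ η, (μ.rnDeriv ν η).toReal * (γ * G η - L) ∂ν)
        = γ * (∫ η, (μ.rnDeriv ν η).toReal * G η ∂ν) - L := by
      have h1 : (fun η => (μ.rnDeriv ν η).toReal * (γ * G η - L))
          = fun η => γ * ((μ.rnDeriv ν η).toReal * G η)
            - L * (μ.rnDeriv ν η).toReal := funext fun η => by ring
      rw [h1, integral_sub (hfRG_int.const_mul γ) (hfR_int.const_mul L),
        integral_const_mul, integral_const_mul, hfR_integral, mul_one]
    have hrhs_eq : (∫ η, ((μ.rnDeriv ν η).toReal * Real.log (μ.rnDeriv ν η).toReal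
          - (μ.rnDeriv ν η).toReal + Real.exp (γ * G η - L)) ∂ν)
        = (∫ η, (μ.rnDeriv ν η).toReal * Real.log (μ.rnDeriv ν η).toReal ∂ν) - 1 + 1 := by
      rw [integral_add (show Integrable (fun η =>
        (μ.rnDeriv ν η).toReal * Real.log (μ.rnDeriv ν η).toReal
          - (μ.rnDeriv ν η).toReal) ν from hint.sub hfR_int) hE_int,
        integral_sub hint hfR_int,
        hfR_integral, hE_integral]
    rw [hlhs_eq, hrhs_eq] at hmono
    have hμG : (∫ η, G η ∂μ) = ∫ η, (μ.rnDeriv ν η).toReal * G η ∂ν := by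
      rw [← MeasureTheory.integral_rnDeriv_smul hμν (f := G)]
      simp [smul_eq_mul]
    have hGμ_le : (∫ η, G η ∂μ) ≤ ε * (N:ℝ)^n := by
      have h1 : γ * (∫ η, G η ∂μ) ≤ C * (N:ℝ)^n + L := by
        rw [hμG]; linarith
      have h2 : L ≤ (N:ℝ)^n := by
        calc L ≤ (B.card : ℝ) * τ := hLle
        _ ≤ (cR * (N:ℝ)^n) * τ := mul_le_mul_of_nonneg_right hcard hτ.le
        _ = (N:ℝ)^n := by rw [hτdef]; field_simp
      have h3 : γ * (∫ η, G η ∂μ) ≤ (C+1) * (N:ℝ)^n := by nlinarith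
      have hγε : γ * (ε * (N:ℝ)^n) = (C+1) * (N:ℝ)^n := by
        rw [hγdef]
        calc (C+1)/ε * (ε * (N:ℝ)^n) = (C+1) * ((ε * (N:ℝ)^n) / ε) := by ring
        _ = (C+1) * (N:ℝ)^n := by
            rw [mul_comm ε, mul_div_assoc, div_self hε.ne', mul_one]
      exact le_of_mul_le_mul_left (by rw [hγε]; exact h3) hγ
    have hG_int_μ : Integrable G μ := by
      refine Integrable.mono' (integrable_const ((B.card : ℝ) * M))
        hGmeas.aestronglyMeasurable (ae_of_all _ fun η => ?_)
      rw [Real.norm_eq_abs, abs_of_nonneg (hG0 η)]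
      exact hGle η
    calc (∫⁻ η, ∑ x ∈ B, ENNReal.ofReal (hfn A M (η x)) ∂μ)
        = ∫⁻ η, ENNReal.ofReal (G η) ∂μ := by
          refine lintegral_congr fun η => ?_
          rw [hGdef]
          exact (ENNReal.ofReal_sum_of_nonneg (fun x _ => hfn_nonneg A M (η x))).symm
    _ = ENNReal.ofReal (∫ η, G η ∂μ) :=
          (ofReal_integral_eq_lintegral_ofReal hG_int_μ (ae_of_all _ hG0)).symm
    _ ≤ ENNReal.ofReal (ε * (N:ℝ)^n) := ENNReal.ofReal_le_ofReal hGμ_le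
  -- conclude via monotone convergence
  calc (∫⁻ η, (∑' x : Fin n → ℤ,
          Set.indicator {x : Fin n → ℤ | ∀ i, |(x i : ℝ)| ≤ R * N}
            (fun x => if A < η x then (η x : ℝ≥0∞) else 0) x) ∂μ)
      = ∫⁻ η, ∑ x ∈ B, (if A < η x then (η x : ℝ≥0∞) else 0) ∂μ := by
        refine lintegral_congr fun η => ?_
        rw [tsum_eq_sum (s := B) ?_]
        · refine Finset.sum_congr rfl fun x hx => ?_
          exact Set.indicator_of_mem (by rw [hSB]; exact hx) _
        · intro x hx
          exact Set.indicator_of_notMem (by rw [hSB]; exact fun hc => hx hc) _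
    _ = ∫⁻ η, ⨆ M : ℕ, ∑ x ∈ B, ENNReal.ofReal (hfn A M (η x)) ∂μ := by
        refine lintegral_congr fun η => ?_
        rw [← ENNReal.finsetSum_iSup_of_monotone (fun x => hfn_mono A (η x))]
        exact Finset.sum_congr rfl fun x _ => (isup_ofReal_hfn A (η x)).symm
    _ = ⨆ M : ℕ, ∫⁻ η, ∑ x ∈ B, ENNReal.ofReal (hfn A M (η x)) ∂μ := by
        refine lintegral_iSup (fun M => ?_) (fun M M' hMM' η => ?_)
        · exact Finset.measurable_sum _ fun x _ =>
            (Measurable.of_discrete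
              (f := fun k : ℕ => ENNReal.ofReal (hfn A M k))).comp (measurable_pi_apply x)
        · exact Finset.sum_le_sum fun x _ => hfn_mono A (η x) hMM'
    _ ≤ ENNReal.ofReal (ε * (N:ℝ)^n) := iSup_le key
end

section
/- Well-definedness of the nonlocal hydrodynamic operator for 0 < α < 1: let n ≥ 1, 0 < α < 1, let Φ : ℝ → ℝ be Lipschitz, let Ψ : ℝ → ℝ be bounded and Lipschitz, and let G : ℝ^n → ℝ be bounded and Lipschitz. Then for every u ∈ ℝ^n the function v ↦ ( Φ(G(u−v)) Ψ(G(u)) − Φ(G(u)) Ψ(G(u+v)) ) / ‖v‖^{n+α} is Lebesgue integrable on [0, ∞)^n, so the operator (𝓛G)(u) = ∫_{[0,∞)^n} ( Φ(G(u−v)) Ψ(G(u)) − Φ(G(u)) Ψ(G(u+v)) ) ‖v‖^{-(n+α)} dv is well defined. -/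
open MeasureTheory
open Metric Set

lemma aux_ball_integrable (n : ℕ) (hn : 0 < n) {s : ℝ} (hs0 : 0 < s) (hsn : s < n) :
    IntegrableOn (fun v : EuclideanSpace ℝ (Fin n) => ‖v‖ ^ (-s))
      (Metric.ball 0 1) volume := by
  haveI : Nonempty (Fin n) := ⟨⟨0, hn⟩⟩
  have hmeas : Measurable fun v : EuclideanSpace ℝ (Fin n) => ‖v‖ ^ (-s) := by fun_prop
  refine ⟨hmeas.aestronglyMeasurable.restrict, ?_⟩
  rw [HasFiniteIntegral]
  have hnn : ∀ v : EuclideanSpace ℝ (Fin n), (0:ℝ) ≤ ‖v‖ ^ (-s) :=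
    fun v => Real.rpow_nonneg (norm_nonneg v) _
  have hconv : ∀ v : EuclideanSpace ℝ (Fin n),
      (‖‖v‖ ^ (-s)‖₊ : ENNReal) = ENNReal.ofReal (‖v‖ ^ (-s)) := by
    intro v
    rw [← enorm_eq_nnnorm, ← ofReal_norm_eq_enorm, Real.norm_of_nonneg (hnn v)]
  simp only [enorm_eq_nnnorm, hconv]
  -- the dyadic annuli
  set S : ℕ → Set (EuclideanSpace ℝ (Fin n)) :=
    fun k => {v | (1/2:ℝ)^(k+1) ≤ ‖v‖ ∧ ‖v‖ < (1/2:ℝ)^k} with hS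
  have hcover : Metric.ball (0:EuclideanSpace ℝ (Fin n)) 1 \ {0} ⊆ ⋃ k, S k := by
    intro v hv
    have hv1 : ‖v‖ < 1 := by simpa [mem_ball_zero_iff] using hv.1
    have hv0 : 0 < ‖v‖ := norm_pos_iff.2 (by simpa using hv.2)
    obtain ⟨m, hm⟩ := exists_pow_lt_of_lt_one hv0 (by norm_num : (1/2:ℝ) < 1)
    have hex : ∃ m : ℕ, (1/2:ℝ)^m ≤ ‖v‖ := ⟨m, hm.le⟩
    classical
    set m₀ := Nat.find hex with hm₀
    have hm₀0 : m₀ ≠ 0 := by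
      intro h
      have := Nat.find_spec hex
      rw [← hm₀, h] at this
      simp at this
      linarith
    refine mem_iUnion.2 ⟨m₀ - 1, ?_, ?_⟩
    · have : (1/2:ℝ)^m₀ ≤ ‖v‖ := Nat.find_spec hex
      rwa [show m₀ - 1 + 1 = m₀ by omega]
    · have := Nat.find_min hex (m := m₀ - 1) (by omega)
      push_neg at this
      exact this
  -- split off the null singleton
  have h0 : (volume : Measure (EuclideanSpace ℝ (Fin n))) {0} = 0 := measure_singleton 0
  have hsplit : ∫⁻ v in Metric.ball (0:EuclideanSpace ℝ (Fin n)) 1,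
      ENNReal.ofReal (‖v‖ ^ (-s)) ≤ ∑' k, ∫⁻ v in S k, ENNReal.ofReal (‖v‖ ^ (-s)) := by
    calc ∫⁻ v in Metric.ball (0:EuclideanSpace ℝ (Fin n)) 1, ENNReal.ofReal (‖v‖ ^ (-s))
        ≤ ∫⁻ v in (Metric.ball (0:EuclideanSpace ℝ (Fin n)) 1 \ {0}) ∪ {0},
            ENNReal.ofReal (‖v‖ ^ (-s)) := lintegral_mono_set (by
              intro v hv
              by_cases h : v = 0
              · exact Or.inr (by simp [h])
              · exact Or.inl ⟨hv, by simp [h]⟩)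
      _ ≤ (∫⁻ v in Metric.ball (0:EuclideanSpace ℝ (Fin n)) 1 \ {0},
            ENNReal.ofReal (‖v‖ ^ (-s)))
          + ∫⁻ v in ({0} : Set (EuclideanSpace ℝ (Fin n))), ENNReal.ofReal (‖v‖ ^ (-s)) :=
            lintegral_union_le _ _ _
      _ = ∫⁻ v in Metric.ball (0:EuclideanSpace ℝ (Fin n)) 1 \ {0},
            ENNReal.ofReal (‖v‖ ^ (-s)) := by
            rw [setLIntegral_measure_zero _ _ h0, add_zero]
      _ ≤ ∫⁻ v in ⋃ k, S k, ENNReal.ofReal (‖v‖ ^ (-s)) := lintegral_mono_set hcover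
      _ ≤ ∑' k, ∫⁻ v in S k, ENNReal.ofReal (‖v‖ ^ (-s)) := lintegral_iUnion_le _ _
  -- bound each annulus
  set B := (volume : Measure (EuclideanSpace ℝ (Fin n))) (Metric.ball 0 1) with hB
  have hBlt : B < ⊤ := measure_ball_lt_top
  have hterm : ∀ k : ℕ, (∫⁻ v in S k, ENNReal.ofReal (‖v‖ ^ (-s)))
      ≤ ENNReal.ofReal (((1/2:ℝ)^(k+1))^(-s)) * (ENNReal.ofReal (((1/2:ℝ)^k)^n) * B) := by
    intro k
    have hle : ∀ v ∈ S k, ENNReal.ofReal (‖v‖ ^ (-s))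
        ≤ ENNReal.ofReal (((1/2:ℝ)^(k+1))^(-s)) := by
      intro v hv
      exact ENNReal.ofReal_le_ofReal
        (Real.rpow_le_rpow_of_nonpos (by positivity) hv.1 (by linarith))
    calc (∫⁻ v in S k, ENNReal.ofReal (‖v‖ ^ (-s)))
        ≤ ∫⁻ _ in S k, ENNReal.ofReal (((1/2:ℝ)^(k+1))^(-s)) :=
          setLIntegral_mono' ((measurableSet_le measurable_const measurable_norm).inter
            (measurableSet_lt measurable_norm measurable_const)) hle
      _ = ENNReal.ofReal (((1/2:ℝ)^(k+1))^(-s)) * volume (S k) := by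
          rw [setLIntegral_const]
      _ ≤ ENNReal.ofReal (((1/2:ℝ)^(k+1))^(-s)) *
          volume (Metric.ball (0:EuclideanSpace ℝ (Fin n)) ((1/2:ℝ)^k)) := by
          gcongr
          exact fun v hv => mem_ball_zero_iff.2 hv.2
      _ = ENNReal.ofReal (((1/2:ℝ)^(k+1))^(-s)) * (ENNReal.ofReal (((1/2:ℝ)^k)^n) * B) := by
          rw [Measure.addHaar_ball_of_pos _ _ (by positivity), hB,
            finrank_euclideanSpace_fin]
  -- the geometric series
  have hpow : ∀ m : ℕ, ((1/2:ℝ))^m = (2:ℝ)^(-(m:ℝ)) := by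
    intro m
    rw [Real.rpow_neg (by norm_num), Real.rpow_natCast, one_div, inv_pow]
  have key : ∀ k : ℕ, ((1/2:ℝ)^(k+1))^(-s) * ((1/2:ℝ)^k)^n
      = (2:ℝ)^s * ((2:ℝ)^(s - n))^k := by
    intro k
    have e1 : ((1/2:ℝ)^(k+1))^(-s) = (2:ℝ)^((((k:ℝ))+1)*s) := by
      rw [hpow (k+1), ← Real.rpow_mul (by norm_num : (0:ℝ) ≤ 2)]
      congr 1
      push_cast
      ring
    have e2 : ((1/2:ℝ)^k)^n = (2:ℝ)^(-((k:ℝ)*n)) := by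
      rw [← pow_mul, hpow (k*n)]
      congr 1
      push_cast
      ring
    rw [e1, e2, ← Real.rpow_add (by norm_num : (0:ℝ) < 2),
      ← Real.rpow_natCast ((2:ℝ)^(s - (n:ℝ))) k,
      ← Real.rpow_mul (by norm_num : (0:ℝ) ≤ 2),
      ← Real.rpow_add (by norm_num : (0:ℝ) < 2)]
    congr 1
    ring
  -- finish: sum bounded by a geometric series
  set q : ℝ := (2:ℝ)^(s - (n:ℝ)) with hq
  have hq0 : 0 ≤ q := Real.rpow_nonneg (by norm_num) _
  have hq1 : q < 1 :=
    Real.rpow_lt_one_of_one_lt_of_neg (by norm_num) (by linarith)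
  refine lt_of_le_of_lt (hsplit.trans (ENNReal.tsum_le_tsum hterm)) ?_
  have hrw : ∀ k : ℕ,
      ENNReal.ofReal (((1/2:ℝ)^(k+1))^(-s)) * (ENNReal.ofReal (((1/2:ℝ)^k)^n) * B)
      = ENNReal.ofReal ((2:ℝ)^s) * (ENNReal.ofReal q)^k * B := by
    intro k
    rw [← mul_assoc, ← ENNReal.ofReal_mul (by positivity), key k,
      ENNReal.ofReal_mul (by positivity), ENNReal.ofReal_pow hq0]
  simp only [hrw]
  rw [ENNReal.tsum_mul_right, ENNReal.tsum_mul_left, ENNReal.tsum_geometric]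
  have hqlt : ENNReal.ofReal q < 1 := by
    rw [← ENNReal.ofReal_one]
    exact ENNReal.ofReal_lt_ofReal_iff_of_nonneg hq0 |>.2 hq1
  have hinv : (1 - ENNReal.ofReal q)⁻¹ < ⊤ :=
    ENNReal.inv_lt_top.2 (tsub_pos_of_lt hqlt)
  exact ENNReal.mul_lt_top (ENNReal.mul_lt_top ENNReal.ofReal_lt_top hinv) hBlt

/-- For `n ≥ 1`, `0 < α < 1`, `Φ` Lipschitz, `Ψ` bounded Lipschitz and
`G` bounded Lipschitz, the integrand of the nonlocal hydrodynamic operator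
`(𝓛G)(u) = ∫_{[0,∞)^n} (Φ(G(u−v)) Ψ(G(u)) − Φ(G(u)) Ψ(G(u+v))) ‖v‖^{-(n+α)} dv`
is Lebesgue integrable on the closed positive orthant, for every `u ∈ ℝ^n`. -/
theorem hydrodynamic_operator_integrable
    (n : ℕ) (hn : 0 < n) (α : ℝ) (hα0 : 0 < α) (hα1 : α < 1)
    (Φ Ψ : ℝ → ℝ) (KΦ : NNReal) (hΦ : LipschitzWith KΦ Φ)
    (KΨ : NNReal) (hΨ : LipschitzWith KΨ Ψ) (hΨb : ∃ M : ℝ, ∀ x, |Ψ x| ≤ M)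
    (G : EuclideanSpace ℝ (Fin n) → ℝ) (KG : NNReal) (hG : LipschitzWith KG G)
    (hGb : ∃ M : ℝ, ∀ u, |G u| ≤ M) :
    ∀ u : EuclideanSpace ℝ (Fin n),
      IntegrableOn
        (fun v : EuclideanSpace ℝ (Fin n) =>
          (Φ (G (u - v)) * Ψ (G u) - Φ (G u) * Ψ (G (u + v))) / ‖v‖ ^ ((n : ℝ) + α))
        {v : EuclideanSpace ℝ (Fin n) | ∀ i, 0 ≤ v i} volume := by
  intro u
  obtain ⟨MΨ, hMΨ⟩ := hΨb
  obtain ⟨MG, hMG⟩ := hGb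
  have hMΨ0 : 0 ≤ MΨ := le_trans (abs_nonneg _) (hMΨ 0)
  have hMG0 : 0 ≤ MG := le_trans (abs_nonneg _) (hMG 0)
  have hn1 : (1:ℝ) ≤ (n:ℝ) := by exact_mod_cast hn
  set p : ℝ := (n:ℝ) + α with hp
  have hppos : 0 < p := by positivity
  set f : EuclideanSpace ℝ (Fin n) → ℝ :=
    fun v => (Φ (G (u - v)) * Ψ (G u) - Φ (G u) * Ψ (G (u + v))) / ‖v‖ ^ p with hf
  have hnumc : Continuous fun v : EuclideanSpace ℝ (Fin n) =>
      Φ (G (u - v)) * Ψ (G u) - Φ (G u) * Ψ (G (u + v)) :=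
    (((hΦ.continuous.comp (hG.continuous.comp
        (continuous_const.sub continuous_id))).mul continuous_const).sub
      (continuous_const.mul (hΨ.continuous.comp (hG.continuous.comp
        (continuous_const.add continuous_id)))))
  have hdenc : Continuous fun v : EuclideanSpace ℝ (Fin n) => ‖v‖ ^ p :=
    continuous_norm.rpow_const fun v => Or.inr hppos.le
  have hfm : AEStronglyMeasurable f volume :=
    (hnumc.measurable.div hdenc.measurable).aestronglyMeasurable
  -- Part A : integrability on the unit ball
  set s₁ : ℝ := p - 1 with hs₁
  have hs₁0 : 0 < s₁ := by simp only [hs₁, hp]; linarith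
  have hs₁n : s₁ < n := by simp only [hs₁, hp]; linarith
  have hball := aux_ball_integrable n hn hs₁0 hs₁n
  set C1 : ℝ := ((KΦ:ℝ) * |Ψ (G u)| + |Φ (G u)| * (KΨ:ℝ)) * (KG:ℝ) with hC1
  have hC1nn : 0 ≤ C1 := by positivity
  have hA : IntegrableOn f (Metric.ball 0 1) volume := by
    refine (hball.const_mul C1).mono' hfm.restrict (ae_of_all _ fun v => ?_)
    show ‖f v‖ ≤ C1 * ‖v‖ ^ (-s₁)
    by_cases hv : v = 0
    · have h1 : ‖(0:EuclideanSpace ℝ (Fin n))‖ ^ p = 0 := by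
        rw [norm_zero, Real.zero_rpow hppos.ne']
      have h2 : ‖f 0‖ = 0 := by simp [hf, h1, div_zero]
      rw [hv, h2]
      have := Real.rpow_nonneg (norm_nonneg (0 : EuclideanSpace ℝ (Fin n))) (-s₁)
      positivity
    · have hvpos : 0 < ‖v‖ := norm_pos_iff.2 hv
      have hb1 : |G (u - v) - G u| ≤ (KG:ℝ) * ‖v‖ := by
        have hb := hG.dist_le_mul (u - v) u
        rw [Real.dist_eq] at hb
        have hc : dist (u - v) u = ‖v‖ := by
          rw [dist_eq_norm]
          simp
        rwa [hc] at hb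
      have hb2 : |G u - G (u + v)| ≤ (KG:ℝ) * ‖v‖ := by
        have hb := hG.dist_le_mul u (u + v)
        rw [Real.dist_eq] at hb
        have hc : dist u (u + v) = ‖v‖ := by
          rw [dist_eq_norm]
          simp
        rwa [hc] at hb
      have h1 : |Φ (G (u - v)) - Φ (G u)| ≤ (KΦ:ℝ) * ((KG:ℝ) * ‖v‖) := by
        have ha := hΦ.dist_le_mul (G (u - v)) (G u)
        rw [Real.dist_eq] at ha
        exact ha.trans (mul_le_mul_of_nonneg_left hb1 (KΦ.coe_nonneg))
      have h2 : |Ψ (G u) - Ψ (G (u + v))| ≤ (KΨ:ℝ) * ((KG:ℝ) * ‖v‖) := by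
        have ha := hΨ.dist_le_mul (G u) (G (u + v))
        rw [Real.dist_eq] at ha
        exact ha.trans (mul_le_mul_of_nonneg_left hb2 (KΨ.coe_nonneg))
      have hnum_le : |Φ (G (u - v)) * Ψ (G u) - Φ (G u) * Ψ (G (u + v))| ≤ C1 * ‖v‖ := by
        have hre : Φ (G (u - v)) * Ψ (G u) - Φ (G u) * Ψ (G (u + v))
            = (Φ (G (u - v)) - Φ (G u)) * Ψ (G u)
              + Φ (G u) * (Ψ (G u) - Ψ (G (u + v))) := by ring
        rw [hre]
        calc |(Φ (G (u - v)) - Φ (G u)) * Ψ (G u)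
              + Φ (G u) * (Ψ (G u) - Ψ (G (u + v)))|
            ≤ |(Φ (G (u - v)) - Φ (G u)) * Ψ (G u)|
              + |Φ (G u) * (Ψ (G u) - Ψ (G (u + v)))| := abs_add_le _ _
          _ = |Φ (G (u - v)) - Φ (G u)| * |Ψ (G u)|
              + |Φ (G u)| * |Ψ (G u) - Ψ (G (u + v))| := by rw [abs_mul, abs_mul]
          _ ≤ ((KΦ:ℝ) * ((KG:ℝ) * ‖v‖)) * |Ψ (G u)|
              + |Φ (G u)| * ((KΨ:ℝ) * ((KG:ℝ) * ‖v‖)) := by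
              gcongr
          _ = C1 * ‖v‖ := by rw [hC1]; ring
      have hfv : ‖f v‖ = |Φ (G (u - v)) * Ψ (G u) - Φ (G u) * Ψ (G (u + v))| / ‖v‖ ^ p := by
        rw [hf]
        simp only [Real.norm_eq_abs, abs_div,
          abs_of_nonneg (Real.rpow_nonneg (norm_nonneg v) p)]
      rw [hfv]
      have hden : 0 < ‖v‖ ^ p := Real.rpow_pos_of_pos hvpos p
      calc |Φ (G (u - v)) * Ψ (G u) - Φ (G u) * Ψ (G (u + v))| / ‖v‖ ^ p
          ≤ (C1 * ‖v‖) / ‖v‖ ^ p := by gcongr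
        _ = C1 * (‖v‖ / ‖v‖ ^ p) := by rw [mul_div_assoc]
        _ = C1 * ‖v‖ ^ (-s₁) := by
            congr 1
            rw [show -s₁ = 1 - p by rw [hs₁]; ring, Real.rpow_sub hvpos,
              Real.rpow_one]
  -- Part B : integrability outside the unit ball
  set C2 : ℝ := (|Φ 0| + (KΦ:ℝ) * MG) * MΨ * 2 with hC2
  have hΦbd : ∀ w : EuclideanSpace ℝ (Fin n), |Φ (G w)| ≤ |Φ 0| + (KΦ:ℝ) * MG := by
    intro w
    have ha := hΦ.dist_le_mul (G w) 0
    rw [Real.dist_eq, Real.dist_eq, sub_zero] at ha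
    calc |Φ (G w)| = |Φ (G w) - Φ 0 + Φ 0| := by ring_nf
      _ ≤ |Φ (G w) - Φ 0| + |Φ 0| := abs_add_le _ _
      _ ≤ (KΦ:ℝ) * |G w| + |Φ 0| := by gcongr
      _ ≤ (KΦ:ℝ) * MG + |Φ 0| := by
          have := hMG w
          gcongr
      _ = |Φ 0| + (KΦ:ℝ) * MG := by ring
  have hC2nn : 0 ≤ C2 := by
    have := abs_nonneg (Φ 0)
    positivity
  set C3 : ℝ := C2 * 2 ^ p with hC3
  have hC3nn : 0 ≤ C3 := by positivity
  have hInt : IntegrableOn (fun v : EuclideanSpace ℝ (Fin n) =>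
      C3 * (1 + ‖v‖) ^ (-p)) (Metric.ball 0 1)ᶜ volume := by
    refine Integrable.integrableOn ?_
    refine (integrable_one_add_norm ?_).const_mul C3
    rw [finrank_euclideanSpace_fin]
    simp only [hp]
    linarith
  have hB : IntegrableOn f (Metric.ball 0 1)ᶜ volume := by
    refine hInt.mono' hfm.restrict ?_
    rw [ae_restrict_iff' measurableSet_ball.compl]
    refine ae_of_all _ fun v hv => ?_
    have hv1 : (1:ℝ) ≤ ‖v‖ := by
      simpa [Metric.mem_ball, not_lt, dist_zero_right] using hv
    have hvpos : 0 < ‖v‖ := lt_of_lt_of_le one_pos hv1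
    have hden : 0 < ‖v‖ ^ p := Real.rpow_pos_of_pos hvpos p
    have hnum_le : |Φ (G (u - v)) * Ψ (G u) - Φ (G u) * Ψ (G (u + v))| ≤ C2 := by
      calc |Φ (G (u - v)) * Ψ (G u) - Φ (G u) * Ψ (G (u + v))|
          ≤ |Φ (G (u - v)) * Ψ (G u)| + |Φ (G u) * Ψ (G (u + v))| := abs_sub _ _
        _ = |Φ (G (u - v))| * |Ψ (G u)| + |Φ (G u)| * |Ψ (G (u + v))| := by
            rw [abs_mul, abs_mul]
        _ ≤ (|Φ 0| + (KΦ:ℝ) * MG) * MΨ + (|Φ 0| + (KΦ:ℝ) * MG) * MΨ := by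
            have g1 := hΦbd (u - v)
            have g2 := hΦbd u
            have g3 := hMΨ (G u)
            have g4 := hMΨ (G (u + v))
            have g5 := abs_nonneg (Φ (G (u - v)))
            have g6 := abs_nonneg (Φ (G u))
            have g7 := abs_nonneg (Ψ (G u))
            have g8 := abs_nonneg (Ψ (G (u + v)))
            nlinarith
        _ = C2 := by rw [hC2]; ring
    have hfv : ‖f v‖ = |Φ (G (u - v)) * Ψ (G u) - Φ (G u) * Ψ (G (u + v))| / ‖v‖ ^ p := by
      rw [hf]
      simp only [Real.norm_eq_abs, abs_div,
        abs_of_nonneg (Real.rpow_nonneg (norm_nonneg v) p)]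
    rw [hfv]
    have h2p : (1 + ‖v‖) ^ p ≤ 2 ^ p * ‖v‖ ^ p := by
      rw [← Real.mul_rpow (by norm_num) (norm_nonneg v)]
      exact Real.rpow_le_rpow (by positivity) (by linarith) hppos.le
    have h1pos : (0:ℝ) < (1 + ‖v‖) ^ p := Real.rpow_pos_of_pos (by positivity) p
    calc |Φ (G (u - v)) * Ψ (G u) - Φ (G u) * Ψ (G (u + v))| / ‖v‖ ^ p
        ≤ C2 / ‖v‖ ^ p := by gcongr
      _ = C2 * 2 ^ p * (2 ^ p * ‖v‖ ^ p)⁻¹ := by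
          have h2ne : (2:ℝ) ^ p ≠ 0 := (Real.rpow_pos_of_pos two_pos p).ne'
          field_simp
      _ ≤ C2 * 2 ^ p * ((1 + ‖v‖) ^ p)⁻¹ := by
          gcongr
      _ = C3 * (1 + ‖v‖) ^ (-p) := by
          rw [hC3, Real.rpow_neg (by positivity)]
  have hAB : IntegrableOn f (Metric.ball 0 1 ∪ (Metric.ball 0 1)ᶜ) volume := hA.union hB
  rw [Set.union_compl_self] at hAB
  exact hAB.mono_set (Set.subset_univ _)
end
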